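/- arXiv:2408.13695 — 6 statements merged into one kernel-verified Lean document; each statement's English description precedes it below -/
import Mathlib

section
/- Let p be a prime with p ≡ 3 (mod 8). If s ∈ F_p \ {0, 1} is such that the Legendre elliptic curve E_s over F_p is supersingular, then there exists t ∈ F_p with s = −t². (Equivalently, T_p = U_p, where T_p := {s ∈ F_p \ {0,1} : E_s supersingular} and U_p := {−t² ∈ F_p \ {0,1} : t ∈ F_p, E_{−t²} supersingular}.) -/
open WeierstrassCurve

/-- The Legendre elliptic curve `y² = x(x-1)(x-s)` over a commutative ring. -/
def LegendreCurve {F : Type} [CommRing F] (s : F) : WeierstrassCurve F :=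
  ⟨0, -(s + 1), 0, s, 0⟩

/-- A Weierstrass curve over a finite field of characteristic `p` is supersingular if the number
of its rational points (including the point at infinity) is congruent to `1` modulo `p`. -/
def IsSupersingular (p : ℕ) {F : Type} [Field F] (W : WeierstrassCurve F) : Prop :=
  Nat.card W.toAffine.Point ≡ 1 [MOD p]

namespace LegendreAux

open WeierstrassCurve.Affine

variable {F : Type} [Field F]

lemma LC_a₁ (s : F) : (LegendreCurve s).toAffine.a₁ = 0 := rfl
lemma LC_a₂ (s : F) : (LegendreCurve s).toAffine.a₂ = -(s + 1) := rfl
lemma LC_a₃ (s : F) : (LegendreCurve s).toAffine.a₃ = 0 := rfl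
lemma LC_a₄ (s : F) : (LegendreCurve s).toAffine.a₄ = s := rfl
lemma LC_a₆ (s : F) : (LegendreCurve s).toAffine.a₆ = 0 := rfl

lemma LC_negY (s x y : F) : (LegendreCurve s).toAffine.negY x y = -y := by
  rw [negY, LC_a₁, LC_a₃]; ring

lemma some_congr {W : Affine F} {x₁ y₁ x₂ y₂ : F} {h₁ : W.Nonsingular x₁ y₁}
    {h₂ : W.Nonsingular x₂ y₂} (hx : x₁ = x₂) (hy : y₁ = y₂) :
    Point.some _ _ h₁ = Point.some _ _ h₂ := by subst hx; subst hy; rfl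

lemma some_inj {W : Affine F} {x₁ y₁ x₂ y₂ : F} {h₁ : W.Nonsingular x₁ y₁}
    {h₂ : W.Nonsingular x₂ y₂} (h : Point.some _ _ h₁ = Point.some _ _ h₂) : x₁ = x₂ ∧ y₁ = y₂ := by
  cases h; exact ⟨rfl, rfl⟩

/-- Half of a 2-torsion point: the key doubling computation. -/
lemma half [DecidableEq F] {s e x0 y0 : F} (h2 : (2 : F) ≠ 0)
    (heq : y0 ^ 2 = x0 ^ 3 - (s + 1) * x0 ^ 2 + s * x0)
    (hy0 : y0 ≠ 0)
    (hX : (3 * x0 ^ 2 - 2 * (s + 1) * x0 + s) ^ 2 = (2 * y0) ^ 2 * (e - s - 1 + 2 * x0))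
    (he : e ^ 3 - (s + 1) * e ^ 2 + s * e = 0)
    (he' : 3 * e ^ 2 - 2 * (s + 1) * e + s ≠ 0) :
    ∃ (hP : (LegendreCurve s).toAffine.Nonsingular x0 y0)
      (hT : (LegendreCurve s).toAffine.Nonsingular e 0),
      Point.some _ _ hP + Point.some _ _ hP = Point.some _ _ hT := by
  have h2y : (2 * y0 : F) ≠ 0 := mul_ne_zero h2 hy0
  have hP : (LegendreCurve s).toAffine.Nonsingular x0 y0 := by
    rw [nonsingular_iff']
    refine ⟨?_, Or.inr ?_⟩
    · rw [equation_iff', LC_a₁, LC_a₂, LC_a₃, LC_a₄, LC_a₆]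
      linear_combination heq
    · rw [LC_a₁, LC_a₃]
      intro h; apply h2y; linear_combination h
  have hT : (LegendreCurve s).toAffine.Nonsingular e 0 := by
    rw [nonsingular_iff']
    refine ⟨?_, Or.inl ?_⟩
    · rw [equation_iff', LC_a₁, LC_a₂, LC_a₃, LC_a₄, LC_a₆]
      linear_combination -he
    · rw [LC_a₁, LC_a₂, LC_a₄]
      intro h; apply he'; linear_combination -h
  have hYne : y0 ≠ (LegendreCurve s).toAffine.negY x0 y0 := by
    rw [LC_negY]
    intro h; apply hy0
    have h' : 2 * y0 = 0 := by linear_combination h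
    exact (mul_eq_zero.mp h').resolve_left h2
  have hslope : (LegendreCurve s).toAffine.slope x0 x0 y0 y0 =
      (3 * x0 ^ 2 - 2 * (s + 1) * x0 + s) / (2 * y0) := by
    rw [slope_of_Y_ne rfl hYne, LC_negY, LC_a₁, LC_a₂, LC_a₄]
    congr 1 <;> ring
  have hsq : ((3 * x0 ^ 2 - 2 * (s + 1) * x0 + s) / (2 * y0)) ^ 2 = e - s - 1 + 2 * x0 := by
    rw [div_pow, div_eq_iff (pow_ne_zero 2 h2y)]
    linear_combination hX
  have hx' : (LegendreCurve s).toAffine.addX x0 x0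
      ((LegendreCurve s).toAffine.slope x0 x0 y0 y0) = e := by
    rw [addX, hslope, LC_a₁, LC_a₂, hsq]
    ring
  refine ⟨hP, hT, ?_⟩
  rw [Point.add_self_of_Y_ne hYne]
  have heq2 := (nonsingular_add hP hP fun h => hYne h.2).1
  rw [equation_iff', LC_a₁, LC_a₂, LC_a₃, LC_a₄, LC_a₆, hx'] at heq2
  have hy2 : ((LegendreCurve s).toAffine.addY x0 x0 y0
      ((LegendreCurve s).toAffine.slope x0 x0 y0 y0)) ^ 2 = 0 := by
    linear_combination heq2 + he
  exact some_congr hx' (pow_eq_zero_iff (two_ne_zero) |>.mp hy2)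

/-- An injection from the points of a Weierstrass curve into `Option (F × Bool)`. -/
lemma point_inj (W : Affine F) : ∃ g : W.Point → Option (F × Bool), Function.Injective g := by
  classical
  set c : F → F := fun x => if h : ∃ y, W.Equation x y then h.choose else 0 with hc_def
  have hc : ∀ x y, W.Equation x y → W.Equation x (c x) := by
    intro x y h
    have hex : ∃ y, W.Equation x y := ⟨y, h⟩
    simp only [hc_def, dif_pos hex]
    exact hex.choose_spec
  refine ⟨fun Q => match Q with
    | .zero => none
    | @Point.some _ _ _ x y _ => some (x, decide (y = c x)), ?_⟩
  intro Q₁ Q₂ h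
  match Q₁, Q₂ with
  | .zero, .zero => rfl
  | .zero, @Point.some _ _ _ x y hns => simp at h
  | @Point.some _ _ _ x y hns, .zero => simp at h
  | @Point.some _ _ _ x₁ y₁ h₁, @Point.some _ _ _ x₂ y₂ h₂ =>
    simp only [Option.some.injEq, Prod.mk.injEq, decide_eq_decide] at h
    obtain ⟨hx, hb⟩ := h
    subst hx
    by_cases hy1 : y₁ = c x₁
    · exact some_congr rfl (hy1.trans (hb.mp hy1).symm)
    · have hy2 : y₂ ≠ c x₁ := fun hy2 => hy1 (hb.mpr hy2)
      have e1 := (Y_eq_of_X_eq h₁.1 (hc x₁ y₁ h₁.1) rfl).resolve_left hy1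
      have e2 := (Y_eq_of_X_eq h₂.1 (hc x₁ y₁ h₁.1) rfl).resolve_left hy2
      exact some_congr rfl (e1.trans e2.symm)

/-- A 2-torsion point and a 4-torsion point generating a subgroup of order 8. -/
lemma eight_dvd_card {G : Type} [AddCommGroup G] [Finite G] (T P : G)
    (hT2 : T + T = 0) (hP4 : P + P + (P + P) = 0) (hP2 : P + P ≠ 0)
    (hT0 : T ≠ 0) (hTP : T ≠ P + P) : (8 : ℕ) ∣ Nat.card G := by
  have h2T : (zmultiplesHom G T) (((2 : ℕ) : ℤ)) = 0 := by
    simpa [zmultiplesHom_apply, two_zsmul] using hT2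
  have h4P : ((4 : ℤ) • P : G) = 0 := by
    rw [show (4 : ℤ) = 2 + 2 from rfl, add_zsmul, two_zsmul]
    exact hP4
  have h4P' : (zmultiplesHom G P) (((4 : ℕ) : ℤ)) = 0 := by
    simpa [zmultiplesHom_apply] using h4P
  let fT : ZMod 2 →+ G := ZMod.lift 2 ⟨zmultiplesHom G T, h2T⟩
  let fP : ZMod 4 →+ G := ZMod.lift 4 ⟨zmultiplesHom G P, h4P'⟩
  have hfT : ∀ n : ℤ, fT ((n : ℤ) : ZMod 2) = n • T := fun n => by
    rw [← zmultiplesHom_apply]; exact ZMod.lift_coe 2 ⟨zmultiplesHom G T, h2T⟩ n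
  have hfP : ∀ n : ℤ, fP ((n : ℤ) : ZMod 4) = n • P := fun n => by
    rw [← zmultiplesHom_apply]; exact ZMod.lift_coe 4 ⟨zmultiplesHom G P, h4P'⟩ n
  have hfT1 : fT 1 = T := by simpa using hfT 1
  have hfP1 : fP 1 = P := by simpa using hfP 1
  have hfP2 : fP 2 = P + P := by
    have h := hfP 2
    rwa [show ((2 : ℤ) : ZMod 4) = 2 by norm_cast, two_zsmul] at h
  have hfP3 : fP 3 = (3 : ℤ) • P := by
    have h := hfP 3
    rwa [show ((3 : ℤ) : ZMod 4) = 3 by norm_cast] at h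
  let f : ZMod 2 × ZMod 4 →+ G :=
    fT.comp (AddMonoidHom.fst _ _) + fP.comp (AddMonoidHom.snd _ _)
  have hev : ∀ a b, f (a, b) = fT a + fP b := fun a b => rfl
  have hP0 : P ≠ 0 := by
    intro h; apply hP2; rw [h, add_zero]
  have hf : Function.Injective f := by
    rw [injective_iff_map_eq_zero]
    rintro ⟨a, b⟩ hab
    rw [hev] at hab
    have hA : ∀ x : ZMod 2, x = 0 ∨ x = 1 := by decide
    have hB : ∀ x : ZMod 4, x = 0 ∨ x = 1 ∨ x = 2 ∨ x = 3 := by decide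
    rcases hA a with rfl | rfl <;> rcases hB b with rfl | rfl | rfl | rfl
    · rfl
    · rw [map_zero, zero_add, hfP1] at hab
      exact absurd hab hP0
    · rw [map_zero, zero_add, hfP2] at hab
      exact absurd hab hP2
    · rw [map_zero, zero_add, hfP3] at hab
      exfalso; apply hP0
      have h34 : P = (4 : ℤ) • P - (3 : ℤ) • P := by
        rw [show (4 : ℤ) = 3 + 1 from rfl, add_zsmul, one_zsmul]; abel
      rw [h34, h4P, hab, sub_zero]
    · rw [map_zero, add_zero, hfT1] at hab
      exact absurd hab hT0
    · rw [hfT1, hfP1] at hab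
      exfalso; apply hP2
      have hT' : T = -P := eq_neg_of_add_eq_zero_left hab
      rw [hT', ← neg_add] at hT2
      exact neg_eq_zero.mp hT2
    · rw [hfT1, hfP2] at hab
      exfalso; apply hTP
      have hT' : T = -(P + P) := eq_neg_of_add_eq_zero_left hab
      rw [hT', neg_eq_of_add_eq_zero_left hP4]
    · rw [hfT1, hfP3] at hab
      exfalso; apply hP2
      have h3 : (3 : ℤ) • P = -P := by
        apply eq_neg_of_add_eq_zero_left
        have h31 : (3 : ℤ) • P + P = (4 : ℤ) • P := by
          rw [show (4 : ℤ) = 3 + 1 from rfl, add_zsmul, one_zsmul]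
        rw [h31, h4P]
      rw [h3] at hab
      have hTP' : T = P := by
        have := eq_neg_of_add_eq_zero_left hab
        simpa using this
      rw [hTP'] at hT2
      exact hT2
  have hcard : Nat.card (f.range) = 8 :=
    calc Nat.card f.range = Nat.card (Set.range ⇑f) :=
          Nat.card_congr (Equiv.setCongr (AddMonoidHom.coe_range f))
      _ = Nat.card (ZMod 2 × ZMod 4) := Nat.card_range_of_injective hf
      _ = 8 := by rw [Nat.card_prod, Nat.card_zmod, Nat.card_zmod]
  calc (8 : ℕ) = Nat.card (f.range) := hcard.symm
    _ ∣ Nat.card G := AddSubgroup.card_addSubgroup_dvd_card _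

end LegendreAux

open LegendreAux WeierstrassCurve.Affine in
/-- The main contradiction: if some 2-torsion point `(e,0)` with `e ≠ 0` is halvable on a
supersingular Legendre curve with `p ≡ 3 (mod 8)`, we get a contradiction. -/
lemma legendre_contradiction (p : ℕ) [Fact p.Prime] (hp : p % 8 = 3)
    (s e x0 y0 : ZMod p) (hss : IsSupersingular p (LegendreCurve s))
    (he0 : e ≠ 0) (hs0 : s ≠ 0)
    (heq : y0 ^ 2 = x0 ^ 3 - (s + 1) * x0 ^ 2 + s * x0)
    (hy0 : y0 ≠ 0)
    (hX : (3 * x0 ^ 2 - 2 * (s + 1) * x0 + s) ^ 2 = (2 * y0) ^ 2 * (e - s - 1 + 2 * x0))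
    (he : e ^ 3 - (s + 1) * e ^ 2 + s * e = 0)
    (he' : 3 * e ^ 2 - 2 * (s + 1) * e + s ≠ 0) : False := by
  have hprime : p.Prime := Fact.out
  have hp5 : 3 ≤ p := by omega
  haveI : NeZero p := ⟨by omega⟩
  have h2 : (2 : ZMod p) ≠ 0 := by
    have h2' : ((2 : ℕ) : ZMod p) ≠ 0 := by
      rw [Ne, ZMod.natCast_eq_zero_iff]
      intro h
      have := Nat.le_of_dvd (by norm_num) h
      omega
    simpa using h2'
  obtain ⟨hP, hTe, hsum⟩ := half h2 heq hy0 hX he he'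
  have hT00 : (LegendreCurve s).toAffine.Nonsingular 0 0 := by
    rw [nonsingular_iff']
    refine ⟨?_, Or.inl ?_⟩
    · rw [equation_iff', LC_a₁, LC_a₂, LC_a₃, LC_a₄, LC_a₆]; ring
    · rw [LC_a₁, LC_a₂, LC_a₄]
      intro h; apply hs0; linear_combination -h
  set Pt : (LegendreCurve s).toAffine.Point := Point.some _ _ hP with hPt
  set T : (LegendreCurve s).toAffine.Point := Point.some _ _ hT00 with hTdef
  have hT2 : T + T = 0 := Point.add_self_of_Y_eq (by rw [LC_negY]; ring)
  have hP4 : Pt + Pt + (Pt + Pt) = 0 := by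
    rw [hsum]; exact Point.add_self_of_Y_eq (by rw [LC_negY]; ring)
  have hP2 : Pt + Pt ≠ 0 := by rw [hsum]; exact Point.some_ne_zero _
  have hT0 : T ≠ 0 := Point.some_ne_zero _
  have hTP : T ≠ Pt + Pt := by
    rw [hsum]
    intro hEq
    exact he0 (some_inj hEq).1.symm
  obtain ⟨g, hg⟩ := point_inj (LegendreCurve s).toAffine
  haveI : Finite (LegendreCurve s).toAffine.Point := Finite.of_injective g hg
  have hdvd : (8 : ℕ) ∣ Nat.card (LegendreCurve s).toAffine.Point :=
    eight_dvd_card T Pt hT2 hP4 hP2 hT0 hTP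
  have hle : Nat.card (LegendreCurve s).toAffine.Point ≤ 2 * p + 1 := by
    have h1 := Nat.card_le_card_of_injective g hg
    have h2' : Nat.card (Option (ZMod p × Bool)) = 2 * p + 1 := by
      simp [Nat.card_eq_fintype_card, ZMod.card]
      ring
    omega
  set N := Nat.card (LegendreCurve s).toAffine.Point with hN
  have hmod : N % p = 1 := by
    have hss' := hss
    unfold IsSupersingular at hss'
    rw [Nat.ModEq] at hss'
    rwa [Nat.mod_eq_of_lt (by omega : 1 < p)] at hss'
  obtain ⟨k, hk⟩ := hdvd
  have hdm := Nat.div_add_mod N p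
  obtain ⟨q, hq⟩ : ∃ q, N = p * q + 1 := ⟨N / p, by rw [← hmod]; exact hdm.symm⟩
  have hq2 : q ≤ 2 := by
    refine Nat.le_of_mul_le_mul_left ?_ (show 0 < p by omega)
    omega
  interval_cases q <;> omega

open LegendreAux in
/-- Let `p ≡ 3 (mod 8)` be a prime. If `s ∈ F_p \ {0, 1}` is such that the Legendre curve
`E_s` over `F_p` is supersingular, then `s = -t²` for some `t ∈ F_p`. -/
theorem legendre_supersingular_is_neg_square (p : ℕ) [Fact p.Prime] (hp : p % 8 = 3)
    (s : ZMod p) (hs0 : s ≠ 0) (hs1 : s ≠ 1)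
    (hss : IsSupersingular p (LegendreCurve s)) :
    ∃ t : ZMod p, s = -t ^ 2 := by
  have hprime : p.Prime := Fact.out
  haveI : NeZero p := ⟨by omega⟩
  have hns : ¬ IsSquare (-1 : ZMod p) := by
    rw [ZMod.exists_sq_eq_neg_one_iff]
    omega
  have hsq : ∀ a : ZMod p, a ≠ 0 → ¬IsSquare a → IsSquare (-a) := by
    intro a ha hna
    have hq : quadraticChar (ZMod p) a = -1 :=
      (quadraticChar_neg_one_iff_not_isSquare).mpr hna
    have hq1 : quadraticChar (ZMod p) (-1) = -1 :=
      (quadraticChar_neg_one_iff_not_isSquare).mpr hns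
    have hmul : quadraticChar (ZMod p) (-a) = 1 := by
      rw [show (-a : ZMod p) = (-1) * a by ring, map_mul, hq, hq1]
      norm_num
    exact (quadraticChar_one_iff_isSquare (neg_ne_zero.mpr ha)).mp hmul
  by_cases hS : IsSquare s
  · exfalso
    obtain ⟨u, hu⟩ := hS
    subst hu
    by_cases hS1 : IsSquare (1 - u * u)
    · -- case i : halve the point (1, 0)
      obtain ⟨v, hv⟩ := hS1
      have hv0 : v ≠ 0 := by
        intro h; apply hs1
        have : (1 : ZMod p) - u * u = 0 := by rw [hv, h, mul_zero]
        linear_combination -this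
      have h1v : (1 : ZMod p) + v ≠ 0 := by
        intro h; apply hs0
        have hv' : v = -1 := by linear_combination h
        rw [hv', mul_neg_one, neg_neg] at hv
        linear_combination -hv
      refine legendre_contradiction p hp (u * u) 1 (1 + v) (v * (1 + v)) hss one_ne_zero hs0
        ?_ (mul_ne_zero hv0 h1v) ?_ (by ring) ?_
      · linear_combination (-v ^ 2 - v) * hv
      · linear_combination (1 + 8 * v + 15 * v ^ 2 + 8 * v ^ 3 - u ^ 2 - 4 * u ^ 2 * v -
          4 * u ^ 2 * v ^ 2) * hv
      · intro h; apply mul_ne_zero hv0 hv0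
        linear_combination h - hv
    · -- case ii : halve the point (s, 0)
      have hS2 := hsq (1 - u * u) (by
        intro h; apply hs1; linear_combination -h) hS1
      obtain ⟨w, hw⟩ := hS2
      have hw' : w * w = u * u - 1 := by linear_combination -hw
      have hu0 : u ≠ 0 := by
        intro h; apply hs0; rw [h, mul_zero]
      have hw0 : w ≠ 0 := by
        intro h; apply hs1
        rw [h, mul_zero] at hw'
        linear_combination -hw'
      have huw : u + w ≠ 0 := by
        intro h
        have hwu : w = -u := eq_neg_of_add_eq_zero_right h
        rw [hwu] at hw'
        have : (1 : ZMod p) = 0 := by linear_combination hw'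
        exact one_ne_zero this
      refine legendre_contradiction p hp (u * u) (u * u) (u * u + u * w) (u * w * (u + w)) hss
        hs0 hs0 ?_ (mul_ne_zero (mul_ne_zero hu0 hw0) huw) ?_ (by ring) ?_
      · linear_combination (u ^ 2 * w ^ 2 + u ^ 3 * w) * hw'
      · linear_combination (-8 * u ^ 3 * w ^ 3 - 15 * u ^ 4 * w ^ 2 + 4 * u ^ 2 * w ^ 2 +
          4 * u ^ 3 * w - 8 * u ^ 5 * w - u ^ 6 + u ^ 4) * hw'
      · intro h
        apply mul_ne_zero (mul_ne_zero hu0 hw0) (mul_ne_zero hu0 hw0)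
        linear_combination h + u ^ 2 * hw'
  · obtain ⟨t, ht⟩ := hsq s hs0 hS
    exact ⟨t, by rw [pow_two, ← ht, neg_neg]⟩
end

section
/- Let p > 3 be a prime with p ≡ 3 (mod 4) and let s ∈ F_p \ {0, 1} be such that the Legendre elliptic curve E_s over F_p is supersingular. Then there exists t ∈ F_p with −t² ∉ {0, 1} such that E_s is isomorphic over F_p to the Legendre elliptic curve E_{−t²}. -/
open WeierstrassCurve

/-- `-1` is not a square mod `p` when `p ≡ 3 (mod 4)`. -/
lemma aux_not_isSquare_neg_one {p : ℕ} [Fact p.Prime] (hp : p % 4 = 3) :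
    ¬IsSquare (-1 : ZMod p) := by
  rw [ZMod.exists_sq_eq_neg_one_iff]; simp [hp]

/-- If `a ≠ 0` is a nonsquare mod `p` with `p ≡ 3 (mod 4)`, then `-a` is a square. -/
lemma aux_isSquare_neg_of_not {p : ℕ} [Fact p.Prime] (hp : p % 4 = 3) {a : ZMod p}
    (ha : a ≠ 0) (h : ¬IsSquare a) : IsSquare (-a) := by
  classical
  have h1 : quadraticChar (ZMod p) a = -1 := quadraticChar_neg_one_iff_not_isSquare.mpr h
  have h2 : quadraticChar (ZMod p) (-1) = -1 :=
    quadraticChar_neg_one_iff_not_isSquare.mpr (aux_not_isSquare_neg_one hp)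
  have h3 : quadraticChar (ZMod p) (-a) = 1 := by
    rw [show (-a : ZMod p) = -1 * a by ring, map_mul, h1, h2]; ring
  exact (quadraticChar_one_iff_isSquare (neg_ne_zero.mpr ha)).mp h3

/-- `-t² ≠ 1` mod `p` when `p ≡ 3 (mod 4)`. -/
lemma aux_neg_sq_ne_one {p : ℕ} [Fact p.Prime] (hp : p % 4 = 3) (t : ZMod p) :
    -t ^ 2 ≠ 1 := by
  intro h
  exact aux_not_isSquare_neg_one hp ⟨t, by linear_combination h⟩

lemma aux_curve_B1 (p : ℕ) [Fact p.Prime] (b : ZMod p) (hb : b ≠ 0) :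
    (⟨Units.mk0 b hb, 1, 0, 0⟩ : VariableChange (ZMod p)) • LegendreCurve (b * b + 1)
      = LegendreCurve (-(b⁻¹) ^ 2) := by
  ext <;>
    simp only [variableChange_def, LegendreCurve, Units.val_inv_eq_inv_val, Units.val_mk0] <;>
    field_simp <;> ring

lemma aux_curve_B2 (p : ℕ) [Fact p.Prime] (c : ZMod p) (hc : c ≠ 0) :
    (⟨Units.mk0 c hc, 1 - c * c, 0, 0⟩ : VariableChange (ZMod p)) • LegendreCurve (1 - c * c)
      = LegendreCurve ((c * c - 1) / (c * c)) := by
  ext <;>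
    simp only [variableChange_def, LegendreCurve, Units.val_inv_eq_inv_val, Units.val_mk0] <;>
    field_simp <;> ring

/-- Let `p > 3` be a prime with `p ≡ 3 (mod 4)` and let `s ∈ F_p \ {0,1}` be such that the
Legendre curve `E_s` over `F_p` is supersingular. Then `E_s` is isomorphic over `F_p`
(via an `F_p`-rational change of Weierstrass coordinates) to `E_{-t²}` for some `t ∈ F_p`
with `-t² ∉ {0, 1}`. -/
theorem legendre_supersingular_isom_neg_square (p : ℕ) [Fact p.Prime] (hp3 : 3 < p)
    (hp : p % 4 = 3) (s : ZMod p) (hs0 : s ≠ 0) (hs1 : s ≠ 1)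
    (hss : IsSupersingular p (LegendreCurve s)) :
    ∃ t : ZMod p, -t ^ 2 ≠ 0 ∧ -t ^ 2 ≠ 1 ∧
      ∃ C : WeierstrassCurve.VariableChange (ZMod p),
        C • (LegendreCurve s) = LegendreCurve (-t ^ 2) := by
  by_cases hsq1 : IsSquare (s - 1)
  · -- `s - 1 = b²`: use `u² = s - 1`, `r = 1`, giving `λ = -(b⁻¹)²`.
    obtain ⟨b, hbb⟩ := hsq1
    have hb : b ≠ 0 := by
      rintro rfl
      exact hs1 (by linear_combination hbb : s = 1)
    have hs : s = b * b + 1 := by linear_combination hbb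
    subst hs
    refine ⟨b⁻¹, ?_, aux_neg_sq_ne_one hp _, ⟨Units.mk0 b hb, 1, 0, 0⟩, aux_curve_B1 p b hb⟩
    simpa using inv_ne_zero hb
  · by_cases hsq : IsSquare s
    · -- `s` square, `s - 1` nonsquare: `1 - s = c²`, `s = a²`, `λ = (c²-1)/c² = -(a/c)²`.
      obtain ⟨a, ha⟩ := hsq
      have hsm1 : s - 1 ≠ 0 := sub_ne_zero.mpr hs1
      obtain ⟨c, hc⟩ : IsSquare (1 - s) := by
        have := aux_isSquare_neg_of_not hp hsm1 hsq1
        rwa [show -(s - 1) = 1 - s by ring] at this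
      have hc0 : c ≠ 0 := by
        rintro rfl
        exact hs1 (by linear_combination -hc : s = 1)
      have ha0 : a ≠ 0 := by rintro rfl; exact hs0 (by linear_combination ha)
      have hs : s = 1 - c * c := by linear_combination -hc
      subst hs
      refine ⟨a * c⁻¹, ?_, aux_neg_sq_ne_one hp _, ⟨Units.mk0 c hc0, 1 - c * c, 0, 0⟩, ?_⟩
      · simp [ha0, hc0]
      · rw [aux_curve_B2 p c hc0]
        congr 1
        field_simp
        linear_combination -ha
    · -- `s` nonsquare: `-s = t²`, identity change of variables.
      obtain ⟨t, ht⟩ := aux_isSquare_neg_of_not hp hs0 hsq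
      have hst : s = -t ^ 2 := by linear_combination -ht
      exact ⟨t, hst ▸ hs0, hst ▸ hs1, 1, by
        rw [one_smul, hst]⟩
end

section
/- Let p be a prime with p ≡ 7 (mod 8) and let t ∈ F_p with t ≠ 0. If the elliptic curve E : y² = x(x−1)(x+t²) over F_p is supersingular, then t² + 1 is a nonzero square in F_p. -/
open WeierstrassCurve

/-- The elliptic curve `y² = x(x-1)(x+t²)`, i.e. `y² = x³ + (t²-1)x² - t²x`. -/
def TCurve {F : Type} [CommRing F] (t : F) : WeierstrassCurve F :=
  ⟨0, t ^ 2 - 1, 0, -t ^ 2, 0⟩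

lemma key_group {G : Type} [AddCommGroup G] [Finite G] (h8 : 8 ∣ Nat.card G)
    (h4 : Nat.card {x : G // x + x = 0} ≤ 4) :
    ∃ x : G, x + x ≠ 0 ∧ (x + x) + (x + x) = 0 := by
  classical
  let φ : G →+ G := ⟨⟨fun x => x + x, by simp⟩, fun a b => by simp; abel⟩
  have hker : Nat.card φ.ker ≤ 4 := by
    refine le_trans (le_of_eq (Nat.card_congr (Equiv.subtypeEquivRight ?_))) h4
    intro x
    simp [φ, AddMonoidHom.mem_ker]
  have hkerpos : 0 < Nat.card φ.ker := Nat.card_pos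
  have hcard : Nat.card G = Nat.card φ.range * Nat.card φ.ker := by
    rw [AddSubgroup.card_eq_card_quotient_mul_card_addSubgroup φ.ker]
    congr 1
    exact Nat.card_congr (QuotientAddGroup.quotientKerEquivRange φ).toEquiv
  have heven : 2 ∣ Nat.card φ.range := by
    by_contra h
    have hco : Nat.Coprime 8 (Nat.card φ.range) := by
      have : Nat.Coprime 2 (Nat.card φ.range) := (Nat.prime_two.coprime_iff_not_dvd).mpr h
      exact Nat.Coprime.pow_left 3 this
    have h8k : 8 ∣ Nat.card φ.ker := hco.dvd_of_dvd_mul_left (hcard ▸ h8)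
    have := Nat.le_of_dvd hkerpos h8k
    omega
  haveI : Fintype φ.range := Fintype.ofFinite _
  rw [Nat.card_eq_fintype_card] at heven
  obtain ⟨g, hg⟩ := exists_prime_addOrderOf_dvd_card 2 heven
  obtain ⟨x, hx⟩ := g.2
  refine ⟨x, ?_, ?_⟩
  · intro h0
    have : (g : G) = 0 := by rw [← hx]; simpa [φ] using h0
    have : g = 0 := Subtype.ext this
    rw [this] at hg
    simp at hg
  · have h2g : g + g = 0 := by
      have := addOrderOf_nsmul_eq_zero g
      rw [hg] at this
      simpa [two_nsmul] using this
    have : ((g + g : φ.range) : G) = 0 := by rw [h2g]; rfl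
    push_cast at this
    rw [← hx] at this
    simpa [φ] using this

lemma tcurve_a₁ {F : Type} [CommRing F] (t : F) : (TCurve t).toAffine.a₁ = 0 := rfl
lemma tcurve_a₂ {F : Type} [CommRing F] (t : F) : (TCurve t).toAffine.a₂ = t ^ 2 - 1 := rfl
lemma tcurve_a₃ {F : Type} [CommRing F] (t : F) : (TCurve t).toAffine.a₃ = 0 := rfl
lemma tcurve_a₄ {F : Type} [CommRing F] (t : F) : (TCurve t).toAffine.a₄ = -t ^ 2 := rfl

lemma tcurve_negY {F : Type} [CommRing F] (t x y : F) :
    (TCurve t).toAffine.negY x y = -y := by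
  simp [WeierstrassCurve.Affine.negY, tcurve_a₁, tcurve_a₃]

lemma tcurve_equation_iff {F : Type} [CommRing F] (t x y : F) :
    (TCurve t).toAffine.Equation x y ↔ y ^ 2 = x ^ 3 + (t ^ 2 - 1) * x ^ 2 - t ^ 2 * x := by
  rw [WeierstrassCurve.Affine.equation_iff]
  rw [tcurve_a₁, tcurve_a₂, tcurve_a₃, tcurve_a₄]
  show y ^ 2 + 0 * x * y + 0 * y = x ^ 3 + (t ^ 2 - 1) * x ^ 2 + -t ^ 2 * x + (TCurve t).a₆ ↔ _
  show y ^ 2 + 0 * x * y + 0 * y = x ^ 3 + (t ^ 2 - 1) * x ^ 2 + -t ^ 2 * x + 0 ↔ _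
  constructor <;> intro h <;> linear_combination h

lemma tcurve_nonsingular_of {F : Type} [Field F] (t x : F)
    (heq : (0 : F) = x ^ 3 + (t ^ 2 - 1) * x ^ 2 - t ^ 2 * x)
    (hd : 3 * x ^ 2 + 2 * (t ^ 2 - 1) * x - t ^ 2 ≠ 0) :
    (TCurve t).toAffine.Nonsingular x 0 := by
  rw [WeierstrassCurve.Affine.nonsingular_iff]
  refine ⟨(tcurve_equation_iff t x 0).mpr (by linear_combination heq), Or.inl ?_⟩
  rw [tcurve_a₁, tcurve_a₂, tcurve_a₄]
  intro hc
  exact hd (by linear_combination -hc)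

variable {p : ℕ} [Fact p.Prime]

lemma fiber_le (c : ZMod p) : Fintype.card {y : ZMod p // y ^ 2 = c} ≤ 2 := by
  by_cases h : ∃ y0 : ZMod p, y0 ^ 2 = c
  · obtain ⟨y0, hy0⟩ := h
    have key : ∀ y : ZMod p, y ^ 2 = c → y = y0 ∨ y = -y0 := by
      intro y hy
      have : (y - y0) * (y + y0) = 0 := by linear_combination hy - hy0
      rcases mul_eq_zero.mp this with h | h
      · exact Or.inl (by linear_combination h)
      · exact Or.inr (by linear_combination h)
    have : Function.Injective (fun y : {y : ZMod p // y ^ 2 = c} =>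
        (if (y : ZMod p) = y0 then 0 else 1 : Fin 2)) := by
      intro a b hab
      simp only at hab
      split_ifs at hab with h1 h2 h2
      · exact Subtype.ext (h1.trans h2.symm)
      · exact absurd hab (by norm_num)
      · exact absurd hab (by norm_num)
      · refine Subtype.ext ?_
        rcases key a a.2 with h | h
        · exact absurd h h1
        · rcases key b b.2 with h' | h'
          · exact absurd h' h2
          · rw [h, h']
    simpa using Fintype.card_le_of_injective _ this
  · have : IsEmpty {y : ZMod p // y ^ 2 = c} := ⟨fun y => h ⟨y, y.2⟩⟩
    simp [Fintype.card_eq_zero]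

lemma fiber_zero_le : Fintype.card {y : ZMod p // y ^ 2 = 0} ≤ 1 := by
  have : Subsingleton {y : ZMod p // y ^ 2 = 0} := by
    constructor
    rintro ⟨a, ha⟩ ⟨b, hb⟩
    have ha' : a = 0 := pow_eq_zero_iff (n := 2) (by norm_num) |>.mp ha
    have hb' : b = 0 := pow_eq_zero_iff (n := 2) (by norm_num) |>.mp hb
    exact Subtype.ext (ha'.trans hb'.symm)
  exact Fintype.card_le_one_iff_subsingleton.mpr this

noncomputable def ptMap (t : ZMod p) : (TCurve t).toAffine.Point →
    Option (Σ x : ZMod p, {y : ZMod p // y ^ 2 = x ^ 3 + (t ^ 2 - 1) * x ^ 2 - t ^ 2 * x})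
  | .zero => none
  | @WeierstrassCurve.Affine.Point.some _ _ _ x y h =>
      some ⟨x, y, (tcurve_equation_iff t x y).mp h.1⟩

lemma ptMap_inj (t : ZMod p) : Function.Injective (ptMap t) := by
  rintro (_ | @⟨x1, y1, h1⟩) (_ | @⟨x2, y2, h2⟩) h
  · rfl
  · simp [ptMap] at h
  · simp [ptMap] at h
  · simp only [ptMap, Option.some.injEq] at h
    obtain ⟨hx, hy⟩ := Sigma.mk.inj_iff.mp h
    subst hx
    have : y1 = y2 := congrArg Subtype.val (eq_of_heq hy)
    subst this
    rfl

instance pointFinite (t : ZMod p) : Finite (TCurve t).toAffine.Point :=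
  Finite.of_injective _ (ptMap_inj t)

lemma card_point_le (t : ZMod p) : Nat.card (TCurve t).toAffine.Point ≤ 2 * p := by
  have hinj := ptMap_inj t
  have hle := Nat.card_le_card_of_injective _ hinj
  have hcard : Nat.card (Option (Σ x : ZMod p,
      {y : ZMod p // y ^ 2 = x ^ 3 + (t ^ 2 - 1) * x ^ 2 - t ^ 2 * x})) ≤ 2 * p := by
    rw [Nat.card_eq_fintype_card, Fintype.card_option, Fintype.card_sigma]
    have hsplit := Finset.add_sum_erase Finset.univ
      (fun x : ZMod p => Fintype.card {y : ZMod p // y ^ 2 = x ^ 3 + (t ^ 2 - 1) * x ^ 2 - t ^ 2 * x})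
      (Finset.mem_univ 0)
    rw [← hsplit]
    have h1 : Fintype.card {y : ZMod p // y ^ 2 = 0 ^ 3 + (t ^ 2 - 1) * 0 ^ 2 - t ^ 2 * 0} ≤ 1 := by
      convert fiber_zero_le (p := p) using 2
      ring
    have h2 : ∑ x ∈ Finset.univ.erase 0,
        Fintype.card {y : ZMod p // y ^ 2 = x ^ 3 + (t ^ 2 - 1) * x ^ 2 - t ^ 2 * x}
        ≤ (p - 1) * 2 := by
      have := Finset.sum_le_card_nsmul (Finset.univ.erase (0 : ZMod p))
        (fun x => Fintype.card {y : ZMod p // y ^ 2 = x ^ 3 + (t ^ 2 - 1) * x ^ 2 - t ^ 2 * x}) 2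
        (fun x _ => fiber_le _)
      rwa [Finset.card_erase_of_mem (Finset.mem_univ 0), Finset.card_univ, ZMod.card, smul_eq_mul]
        at this
    have hp1 : 1 ≤ p := (Fact.out : p.Prime).one_lt.le
    omega
  exact hle.trans hcard

lemma two_torsion_aux (t : ZMod p) (h2ne : (2 : ZMod p) ≠ 0) {x y : ZMod p}
    (h : (TCurve t).toAffine.Nonsingular x y)
    (hP : WeierstrassCurve.Affine.Point.some _ _ h + WeierstrassCurve.Affine.Point.some _ _ h = 0) :
    y = 0 ∧ (x = 0 ∨ x = 1 ∨ x = -t ^ 2) := by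
  by_cases hy : y = (TCurve t).toAffine.negY x y
  · have hy0 : y = 0 := by
      rw [tcurve_negY] at hy
      have : 2 * y = 0 := by linear_combination hy
      rcases mul_eq_zero.mp this with h' | h'
      · exact absurd h' h2ne
      · exact h'
    subst hy0
    have heq := (tcurve_equation_iff t x 0).mp h.1
    have : x * (x - 1) * (x + t ^ 2) = 0 := by linear_combination -heq
    refine ⟨rfl, ?_⟩
    rcases mul_eq_zero.mp this with h' | h'
    · rcases mul_eq_zero.mp h' with h'' | h''
      · exact Or.inl h''
      · exact Or.inr (Or.inl (by linear_combination h''))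
    · exact Or.inr (Or.inr (by linear_combination h'))
  · rw [WeierstrassCurve.Affine.Point.add_self_of_Y_ne hy] at hP
    exact absurd hP (WeierstrassCurve.Affine.Point.some_ne_zero _)

/-- Let `p ≡ 7 (mod 8)` be a prime and `t ∈ F_p`, `t ≠ 0`. If the elliptic curve
`y² = x(x-1)(x+t²)` over `F_p` is supersingular, then `t² + 1` is a nonzero square in
`F_p`. -/
theorem sq_add_one_isSquare_of_supersingular (p : ℕ) [Fact p.Prime] (hp : p % 8 = 7)
    (t : ZMod p) (ht : t ≠ 0) (hss : IsSupersingular p (TCurve t)) :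
    t ^ 2 + 1 ≠ 0 ∧ IsSquare (t ^ 2 + 1) := by
  have hprime : p.Prime := Fact.out
  have hp7 : 7 ≤ p := by omega
  have hp4 : p % 4 = 3 := by omega
  have hm1 : ¬ IsSquare (-1 : ZMod p) := by
    rw [ZMod.exists_sq_eq_neg_one_iff]
    simp [hp4]
  have h2ne : (2 : ZMod p) ≠ 0 := by
    intro h
    have : ((2 : ℕ) : ZMod p) = 0 := by exact_mod_cast h
    have := (ZMod.natCast_eq_zero_iff 2 p).mp this
    have := Nat.le_of_dvd (by norm_num) this
    omega
  have ht1 : t ^ 2 + 1 ≠ 0 := by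
    intro h
    exact hm1 ⟨t, by linear_combination -h⟩
  refine ⟨ht1, ?_⟩
  -- three 2-torsion points
  have hns0 : (TCurve t).toAffine.Nonsingular 0 0 := by
    apply tcurve_nonsingular_of t 0 (by ring)
    intro h
    exact pow_ne_zero 2 ht (by linear_combination -h)
  have hns1 : (TCurve t).toAffine.Nonsingular 1 0 := by
    apply tcurve_nonsingular_of t 1 (by ring)
    intro h
    exact ht1 (by linear_combination h)
  have hns2 : (TCurve t).toAffine.Nonsingular (-t ^ 2) 0 := by
    apply tcurve_nonsingular_of t (-t ^ 2) (by ring)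
    intro h
    exact mul_ne_zero (pow_ne_zero 2 ht) ht1 (by linear_combination h)
  -- card = p + 1
  have hN : Nat.card (TCurve t).toAffine.Point = p + 1 := by
    have hle := card_point_le t
    have h2lt : 2 ≤ Nat.card (TCurve t).toAffine.Point := by
      haveI : Nontrivial (TCurve t).toAffine.Point :=
        ⟨⟨WeierstrassCurve.Affine.Point.some _ _ hns0, 0,
          WeierstrassCurve.Affine.Point.some_ne_zero hns0⟩⟩
      exact Finite.one_lt_card
    have hmod : Nat.card (TCurve t).toAffine.Point % p = 1 := by
      have hthis : Nat.card (TCurve t).toAffine.Point % p = 1 % p := hss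
      have h1p : 1 % p = 1 := Nat.mod_eq_of_lt (by omega)
      rw [h1p] at hthis
      exact hthis
    have hdm := Nat.div_add_mod (Nat.card (TCurve t).toAffine.Point) p
    set N := Nat.card (TCurve t).toAffine.Point with hNdef
    set k := N / p with hk
    rw [hmod] at hdm
    have hk2 : k < 2 := by
      by_contra hcon
      push_neg at hcon
      have : p * 2 ≤ p * k := Nat.mul_le_mul_left p hcon
      omega
    interval_cases k <;> omega
  -- 2-torsion has at most 4 points
  have h4 : Nat.card {P : (TCurve t).toAffine.Point // P + P = 0} ≤ 4 := by
    have hsub : {P : (TCurve t).toAffine.Point | P + P = 0} ⊆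
        {0, WeierstrassCurve.Affine.Point.some _ _ hns0, WeierstrassCurve.Affine.Point.some _ _ hns1,
          WeierstrassCurve.Affine.Point.some _ _ hns2} := by
      intro P hP
      simp only [Set.mem_setOf_eq] at hP
      match P, hP with
      | .zero, _ => exact Or.inl rfl
      | @WeierstrassCurve.Affine.Point.some _ _ _ x y h, hP =>
        obtain ⟨hy0, hx⟩ := two_torsion_aux t h2ne h hP
        subst hy0
        rcases hx with h' | h' | h'
        · subst h'; exact Or.inr (Or.inl rfl)
        · subst h'; exact Or.inr (Or.inr (Or.inl rfl))
        · subst h'; exact Or.inr (Or.inr (Or.inr rfl))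
    calc Nat.card {P : (TCurve t).toAffine.Point // P + P = 0}
        = Set.ncard {P : (TCurve t).toAffine.Point | P + P = 0} := Nat.card_coe_set_eq _
      _ ≤ Set.ncard {(0 : (TCurve t).toAffine.Point),
            WeierstrassCurve.Affine.Point.some _ _ hns0, WeierstrassCurve.Affine.Point.some _ _ hns1,
            WeierstrassCurve.Affine.Point.some _ _ hns2} := Set.ncard_le_ncard hsub (Set.toFinite _)
      _ ≤ 4 := by
          refine le_trans (Set.ncard_insert_le _ _) ?_
          have h1 := Set.ncard_insert_le (WeierstrassCurve.Affine.Point.some _ _ hns0)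
            ({WeierstrassCurve.Affine.Point.some _ _ hns1, WeierstrassCurve.Affine.Point.some _ _ hns2} :
              Set (TCurve t).toAffine.Point)
          have h2 := Set.ncard_insert_le (WeierstrassCurve.Affine.Point.some _ _ hns1)
            ({WeierstrassCurve.Affine.Point.some _ _ hns2} : Set (TCurve t).toAffine.Point)
          simp only [Set.ncard_singleton] at *
          omega
  obtain ⟨P, hP2, hP4⟩ := key_group (by rw [hN]; omega) h4
  match P, hP2, hP4 with
  | .zero, hP2, _ => exact absurd (add_zero (0 : (TCurve t).toAffine.Point)) hP2
  | @WeierstrassCurve.Affine.Point.some _ _ _ x y h, hP2, hP4 =>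
    have hy : y ≠ (TCurve t).toAffine.negY x y := by
      intro he
      exact hP2 (WeierstrassCurve.Affine.Point.add_self_of_Y_eq he)
    have hy0 : y ≠ 0 := by
      intro h0
      apply hy
      rw [tcurve_negY, h0, neg_zero]
    rw [WeierstrassCurve.Affine.Point.add_self_of_Y_ne hy] at hP4
    set ℓ := (TCurve t).toAffine.slope x x y y with hldef
    have hE : y ^ 2 = x ^ 3 + (t ^ 2 - 1) * x ^ 2 - t ^ 2 * x := (tcurve_equation_iff t x y).mp h.1
    have h2y : (2 : ZMod p) * y ≠ 0 := mul_ne_zero h2ne hy0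
    have hsl : ℓ * (2 * y) = 3 * x ^ 2 + 2 * (t ^ 2 - 1) * x - t ^ 2 := by
      rw [hldef, WeierstrassCurve.Affine.slope_of_Y_ne rfl hy, tcurve_negY, tcurve_a₁, tcurve_a₂,
        tcurve_a₄]
      have hyy : y - -y ≠ 0 := by intro hc; apply h2y; linear_combination hc
      rw [div_mul_eq_mul_div, div_eq_iff hyy]
      ring
    have hX2 : (TCurve t).toAffine.addX x x ℓ = ℓ ^ 2 - (t ^ 2 - 1) - 2 * x := by
      rw [WeierstrassCurve.Affine.addX, tcurve_a₁, tcurve_a₂]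
      ring
    obtain ⟨hY2, hroots⟩ := two_torsion_aux t h2ne _ hP4
    rw [hX2] at hroots
    rcases hroots with h0 | h1 | h2
    · exfalso
      apply hm1
      refine ⟨(x ^ 2 - 2 * x - t ^ 2) / (2 * y), ?_⟩
      rw [div_mul_div_comm]
      rw [eq_div_iff (mul_ne_zero h2y h2y)]
      linear_combination (-(4:ZMod p) * y ^ 2) * h0 +
        (ℓ * (2 * y) + (3 * x ^ 2 + 2 * (t ^ 2 - 1) * x - t ^ 2)) * hsl -
        4 * (2 * x + t ^ 2) * hE
    · refine ⟨(x ^ 2 + 2 * t ^ 2 * x - t ^ 2) / (2 * y), ?_⟩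
      rw [div_mul_div_comm]
      rw [eq_div_iff (mul_ne_zero h2y h2y)]
      linear_combination (-(4:ZMod p) * y ^ 2) * h1 +
        (ℓ * (2 * y) + (3 * x ^ 2 + 2 * (t ^ 2 - 1) * x - t ^ 2)) * hsl -
        4 * (2 * x - 1) * hE
    · exfalso
      apply hm1
      have h2yt : (2 : ZMod p) * y * t ≠ 0 := mul_ne_zero h2y ht
      refine ⟨(x ^ 2 + t ^ 2) / (2 * y * t), ?_⟩
      rw [div_mul_div_comm]
      rw [eq_div_iff (mul_ne_zero h2yt h2yt)]
      linear_combination (-(4:ZMod p) * y ^ 2) * h2 +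
        (ℓ * (2 * y) + (3 * x ^ 2 + 2 * (t ^ 2 - 1) * x - t ^ 2)) * hsl -
        4 * (t ^ 2 - 1 + 2 * x) * hE
end

section
/- Let p be a prime with p ≡ 7 (mod 8), let t ∈ F_p with t ≠ 0, and let E be the elliptic curve y² = x(x−1)(x+t²) over F_p. If E is supersingular, then the 2-torsion point Q₁ = (1, 0) lies in [2]E(F_p), i.e., there exists P ∈ E(F_p) with [2]P = Q₁. -/
open WeierstrassCurve

section Aux
variable {p : ℕ} [Fact p.Prime] {t : ZMod p}

lemma tc_equation (x y : ZMod p) :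
    (TCurve t).toAffine.Equation x y ↔ y ^ 2 = x ^ 3 + (t ^ 2 - 1) * x ^ 2 - t ^ 2 * x := by
  rw [Affine.equation_iff]
  simp [TCurve]
  constructor <;> intro h <;> linear_combination h

lemma tc_negY (x y : ZMod p) : (TCurve t).toAffine.negY x y = -y := by
  simp [Affine.negY, TCurve]

noncomputable instance : Finite (TCurve t).toAffine.Point := by
  have : Finite (Option (ZMod p × ZMod p)) := inferInstance
  apply Finite.of_injective (fun P => match P with
    | .zero => (none : Option (ZMod p × ZMod p))
    | @Affine.Point.some _ _ _ x y h => some (x, y))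
  rintro (_ | @⟨x₁, y₁, h₁⟩) (_ | @⟨x₂, y₂, h₂⟩) h <;> simp_all

lemma tc_addX_sq (hp2 : (2 : ZMod p) ≠ 0) {x y : ZMod p}
    (he : (TCurve t).toAffine.Equation x y) (hy : y ≠ 0) :
    (TCurve t).toAffine.addX x x ((TCurve t).toAffine.slope x x y y) = ((x ^ 2 + t ^ 2) / (2 * y)) ^ 2 ∧
    (TCurve t).toAffine.addX x x ((TCurve t).toAffine.slope x x y y) - 1
      = ((x ^ 2 - 2 * x - t ^ 2) / (2 * y)) ^ 2 := by
  have hy2 : (2 : ZMod p) * y ≠ 0 := mul_ne_zero hp2 hy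
  have hyny : y ≠ (TCurve t).toAffine.negY x y := by
    rw [tc_negY]
    intro h
    apply hy2
    linear_combination h
  rw [tc_equation] at he
  rw [Affine.slope_of_Y_ne rfl hyny, tc_negY]
  have h2y : y - -y = 2 * y := by ring
  rw [h2y]
  simp only [Affine.addX, TCurve]
  constructor
  · field_simp
    linear_combination (-4*(t^2-1+2*x)) * he
  · field_simp
    linear_combination (-4*(t^2+2*x)) * he

/-- If a point of the curve is a double, its x-coordinate and x-coordinate minus one
are squares. -/

lemma tc_double_sq (hp2 : (2 : ZMod p) ≠ 0) (P : (TCurve t).toAffine.Point)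
    {a b : ZMod p} (h' : (TCurve t).toAffine.Nonsingular a b)
    (hP : P + P = Affine.Point.some _ _ h') : IsSquare a ∧ IsSquare (a - 1) := by
  rcases P with _ | @⟨x, y, h⟩
  · rw [← Affine.Point.zero_def, add_zero] at hP
    exact absurd hP.symm (Affine.Point.some_ne_zero h')
  · by_cases hy : y = (TCurve t).toAffine.negY x y
    · rw [Affine.Point.add_self_of_Y_eq hy] at hP
      exact absurd hP.symm (Affine.Point.some_ne_zero h')
    · rw [Affine.Point.add_self_of_Y_ne hy] at hP
      rw [Affine.Point.some.injEq] at hP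
      have hy0 : y ≠ 0 := by
        intro h0
        apply hy
        rw [tc_negY, h0, neg_zero]
      obtain ⟨h1, h2⟩ := tc_addX_sq hp2 h.1 hy0
      constructor
      · exact ⟨(x ^ 2 + t ^ 2) / (2 * y), by rw [← hP.1, h1, sq]⟩
      · exact ⟨(x ^ 2 - 2 * x - t ^ 2) / (2 * y), by rw [← hP.1, h2, sq]⟩

/-- Two-torsion points have `y = 0` and `x ∈ {0, 1, -t²}`. -/

lemma tc_two_torsion (hp2 : (2 : ZMod p) ≠ 0) {a b : ZMod p}
    (h' : (TCurve t).toAffine.Nonsingular a b)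
    (h0 : Affine.Point.some _ _ h' + Affine.Point.some _ _ h' = 0) :
    b = 0 ∧ (a = 0 ∨ a = 1 ∨ a = -t ^ 2) := by
  by_cases hb : b = (TCurve t).toAffine.negY a b
  · rw [tc_negY] at hb
    have hb0 : b = 0 := by
      have : 2 * b = 0 := by linear_combination hb
      rcases mul_eq_zero.mp this with h | h
      · exact absurd h hp2
      · exact h
    refine ⟨hb0, ?_⟩
    have he := (tc_equation a b).mp h'.1
    rw [hb0] at he
    have : a * (a - 1) * (a + t ^ 2) = 0 := by linear_combination -he
    rcases mul_eq_zero.mp this with h | h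
    · rcases mul_eq_zero.mp h with h | h
      · exact Or.inl h
      · exact Or.inr (Or.inl (by linear_combination h))
    · exact Or.inr (Or.inr (by linear_combination h))
  · rw [Affine.Point.add_self_of_Y_ne hb] at h0
    exact absurd h0 (Affine.Point.some_ne_zero _)

lemma tc_card_le (hp2 : (2 : ZMod p) ≠ 0) :
    Nat.card (TCurve t).toAffine.Point ≤ 2 * p + 1 := by
  have : NeZero p := ⟨(Fact.out : p.Prime).ne_zero⟩
  have hle := Nat.card_le_card_of_injective
    (fun P : (TCurve t).toAffine.Point => match P with
      | .zero => (none : Option (ZMod p × Bool))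
      | @Affine.Point.some _ _ _ x y h => some (x, decide (y.val ≤ (-y).val)))
    ?_
  · calc Nat.card (TCurve t).toAffine.Point ≤ Nat.card (Option (ZMod p × Bool)) := hle
      _ = 2 * p + 1 := by
        rw [Nat.card_eq_fintype_card]
        simp [ZMod.card]
        ring
  · rintro (_ | @⟨x₁, y₁, h₁⟩) (_ | @⟨x₂, y₂, h₂⟩) h
    · rfl
    · simp at h
    · simp at h
    · simp only [Option.some.injEq, Prod.mk.injEq] at h
      obtain ⟨hx, hb⟩ := h
      subst hx
      -- y₁² = y₂², so y₂ = y₁ or y₂ = -y₁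
      have he₁ := (tc_equation x₁ y₁).mp h₁.1
      have he₂ := (tc_equation x₁ y₂).mp h₂.1
      have : (y₁ - y₂) * (y₁ + y₂) = 0 := by linear_combination he₁ - he₂
      rcases mul_eq_zero.mp this with h | h
      · have : y₁ = y₂ := by linear_combination h
        subst this
        rfl
      · have hy : y₂ = -y₁ := by linear_combination h
        subst hy
        rw [neg_neg] at hb
        have hiff : (y₁.val ≤ (-y₁).val) ↔ ((-y₁).val ≤ y₁.val) := decide_eq_decide.mp hb
        have hval : y₁.val = (-y₁).val := by omega
        have hyy : y₁ = -y₁ := ZMod.val_injective p hval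
        have : y₁ = 0 := by
          have h2 : 2 * y₁ = 0 := by linear_combination hyy
          rcases mul_eq_zero.mp h2 with h | h
          · exact absurd h hp2
          · exact h
        simp only [Affine.Point.some.injEq]
        exact ⟨trivial, hyy⟩

lemma idx_inj {F : Type} [Field F] [DecidableEq F] {u : F} (h0 : u ≠ 0) (h1 : u ≠ 1) {x₁ x₂ : F}
    (hx₁ : x₁ = 0 ∨ x₁ = 1 ∨ x₁ = u) (hx₂ : x₂ = 0 ∨ x₂ = 1 ∨ x₂ = u)
    (h : (if x₁ = 0 then (0 : Fin 3) else if x₁ = 1 then 1 else 2)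
       = (if x₂ = 0 then (0 : Fin 3) else if x₂ = 1 then 1 else 2)) : x₁ = x₂ := by
  rcases hx₁ with rfl | rfl | rfl <;> rcases hx₂ with rfl | rfl | rfl <;>
    simp_all [h0, h1, one_ne_zero]

end Aux

/-- Let `p ≡ 7 (mod 8)` be a prime, `t ∈ F_p` with `t ≠ 0`, and let `E` be the elliptic
curve `y² = x(x-1)(x+t²)` over `F_p`. If `E` is supersingular, then the 2-torsion point
`Q₁ = (1, 0)` is the double of some `F_p`-rational point of `E`. -/
theorem one_torsion_in_double_of_supersingular (p : ℕ) [Fact p.Prime] (hp : p % 8 = 7)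
    (t : ZMod p) (ht : t ≠ 0) (hss : IsSupersingular p (TCurve t)) :
    ∀ h₁ : (TCurve t).toAffine.Nonsingular 1 0,
      ∃ P : (TCurve t).toAffine.Point, 2 • P = WeierstrassCurve.Affine.Point.some _ _ h₁ := by
  intro h₁
  have hpp : p.Prime := Fact.out
  have hp7 : 7 ≤ p := by
    rcases Nat.lt_or_ge p 7 with h | h
    · interval_cases p <;> simp_all
    · exact h
  have hp2' : p ≠ 2 := by omega
  have hp2 : (2 : ZMod p) ≠ 0 := by
    intro h
    have h2 : (p : ℕ) ∣ 2 := by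
      rwa [← Nat.cast_ofNat, ZMod.natCast_eq_zero_iff] at h
    have := Nat.le_of_dvd (by omega) h2
    omega
  -- -1 is not a square
  have hns : ¬ IsSquare (-1 : ZMod p) := by
    rw [ZMod.exists_sq_eq_neg_one_iff]
    omega
  set G := (TCurve t).toAffine.Point
  -- Q₁ has order two
  have hQ1y : (0 : ZMod p) = (TCurve t).toAffine.negY 1 0 := by rw [tc_negY, neg_zero]
  have hQ1 : Affine.Point.some _ _ h₁ + Affine.Point.some _ _ h₁ = 0 :=
    Affine.Point.add_self_of_Y_eq hQ1y
  have hQ1ord : addOrderOf (Affine.Point.some _ _ h₁) = 2 := by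
    apply addOrderOf_eq_prime
    · rw [two_nsmul]; exact hQ1
    · exact Affine.Point.some_ne_zero h₁
  -- card is even
  have h2N : 2 ∣ Nat.card G := hQ1ord ▸ addOrderOf_dvd_natCard (Affine.Point.some _ _ h₁)
  -- card = p + 1
  have hNpos : 0 < Nat.card G := Nat.card_pos
  have hNle : Nat.card G ≤ 2 * p + 1 := tc_card_le hp2
  have hNmod : Nat.card G % p = 1 := by
    have h : Nat.card G % p = 1 % p := hss
    have h1 : (1 : ℕ) % p = 1 := Nat.mod_eq_of_lt (by omega)
    omega
  have hN : Nat.card G = p + 1 := by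
    have hdm := Nat.div_add_mod (Nat.card G) p
    set k := Nat.card G / p with hkdef
    have hkN : Nat.card G = p * k + 1 := by omega
    have hk2 : k ≤ 2 := by
      by_contra hk
      push_neg at hk
      have : p * 3 ≤ p * k := Nat.mul_le_mul_left p (by omega)
      omega
    interval_cases k
    · omega
    · omega
    · -- N = 2p + 1 is odd
      exfalso
      omega
  have h8 : 8 ∣ Nat.card G := by omega
  -- the doubling homomorphism
  let φ : G →+ G := AddMonoidHom.mk' (fun P => P + P) (fun a b => add_add_add_comm a b a b)
  have hφ : ∀ P : G, φ P = P + P := fun _ => rfl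
  -- distinctness of the roots
  have h01 : (0 : ZMod p) ≠ 1 := zero_ne_one
  have ht0 : (-t ^ 2 : ZMod p) ≠ 0 := neg_ne_zero.mpr (pow_ne_zero 2 ht)
  have ht1 : (-t ^ 2 : ZMod p) ≠ 1 := by
    intro h
    exact hns ⟨t⁻¹, by field_simp; linear_combination h⟩
  -- the kernel has at most 4 elements
  have hker_le : Nat.card φ.ker ≤ 4 := by
    have hle := Nat.card_le_card_of_injective
      (fun k : φ.ker => match k.1 with
        | .zero => (none : Option (Fin 3))
        | @Affine.Point.some _ _ _ x _ _ =>
            some (if x = 0 then (0 : Fin 3) else if x = 1 then 1 else 2)) ?_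
    · calc Nat.card φ.ker ≤ Nat.card (Option (Fin 3)) := hle
        _ = 4 := by rw [Nat.card_eq_fintype_card]; rfl
    · rintro ⟨(_ | @⟨x₁, y₁, hn₁⟩), hk₁⟩ ⟨(_ | @⟨x₂, y₂, hn₂⟩), hk₂⟩ h
      · rfl
      · simp at h
      · simp at h
      · rw [AddMonoidHom.mem_ker, hφ] at hk₁ hk₂
        obtain ⟨hy₁, hx₁⟩ := tc_two_torsion hp2 hn₁ hk₁
        obtain ⟨hy₂, hx₂⟩ := tc_two_torsion hp2 hn₂ hk₂
        subst hy₁; subst hy₂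
        have hxx : x₁ = x₂ :=
          idx_inj ht0 ht1 hx₁ hx₂ (Option.some_injective _ h)
        subst hxx
        rfl
  -- the kernel has even cardinality
  have hQ1mem : Affine.Point.some _ _ h₁ ∈ φ.ker := by
    rw [AddMonoidHom.mem_ker, hφ]; exact hQ1
  have hker2 : 2 ∣ Nat.card φ.ker := by
    have hord : addOrderOf (⟨Affine.Point.some _ _ h₁, hQ1mem⟩ : φ.ker) = 2 := by
      apply addOrderOf_eq_prime
      · rw [two_nsmul]
        exact Subtype.ext hQ1
      · intro h
        exact Affine.Point.some_ne_zero h₁ (congrArg Subtype.val h)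
    exact hord ▸ addOrderOf_dvd_natCard _
  have hkerpos : 0 < Nat.card φ.ker := Nat.card_pos
  -- the range has even cardinality
  have hcard_eq : Nat.card G = Nat.card (G ⧸ φ.ker) * Nat.card φ.ker :=
    AddSubgroup.card_eq_card_quotient_mul_card_addSubgroup φ.ker
  have hquot : Nat.card (G ⧸ φ.ker) = Nat.card φ.range :=
    Nat.card_congr (QuotientAddGroup.quotientKerEquivRange φ).toEquiv
  have hrange2 : 2 ∣ Nat.card φ.range := by
    rw [hquot] at hcard_eq
    have hker24 : Nat.card φ.ker = 2 ∨ Nat.card φ.ker = 4 := by omega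
    rcases hker24 with h | h <;> rw [h] at hcard_eq <;> omega
  -- get an order-2 element of the range
  haveI : Fintype φ.range := Fintype.ofFinite _
  have hdvd : 2 ∣ Fintype.card φ.range := by rwa [← Nat.card_eq_fintype_card]
  obtain ⟨g, hg⟩ := exists_prime_addOrderOf_dvd_card 2 hdvd
  have hg2 : g + g = 0 := by
    have h' := addOrderOf_nsmul_eq_zero g
    rwa [hg, two_nsmul] at h'
  have hgG : (g : G) + (g : G) = 0 := by exact_mod_cast congrArg Subtype.val hg2
  have hgne : (g : G) ≠ 0 := by
    intro h
    have : g = 0 := Subtype.ext h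
    rw [this] at hg
    simp at hg
  obtain ⟨P, hPg⟩ := g.2
  rw [hφ] at hPg
  -- analyze the coordinates of g
  rcases hgdef : (g : G) with _ | @⟨a, b, h''⟩
  · exact absurd hgdef hgne
  · rw [hgdef] at hgG hPg
    obtain ⟨hb, ha⟩ := tc_two_torsion hp2 h'' hgG
    obtain ⟨hsq, hsq1⟩ := tc_double_sq hp2 P h'' hPg
    rcases ha with ha | ha | ha
    · -- a = 0 : then a - 1 = -1 is a square, contradiction
      exfalso
      rw [ha] at hsq1
      apply hns
      have : (0 : ZMod p) - 1 = -1 := by ring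
      rwa [this] at hsq1
    · -- a = 1 : done
      subst ha; subst hb
      exact ⟨P, by rw [two_nsmul]; exact hPg⟩
    · -- a = -t² : then a = -t² is a square, contradiction
      exfalso
      rw [ha] at hsq
      obtain ⟨c, hc⟩ := hsq
      apply hns
      exact ⟨c * t⁻¹, by field_simp; linear_combination hc⟩
end

section
/- Let p ≥ 5 be a prime, let λ, λ' ∈ F_p \ {0, 1, −1}, and let a, a' ∈ F_{p²} satisfy a² = λ² − 1 and a'² = λ'² − 1. If (λ − a)² = (λ' − a')², then λ' = λ or λ' = −λ. (This is the injectivity of the map Φ sending the class of λ modulo λ ↦ −λ to the class of Λ(λ) = −(λ−a)² modulo s ↦ 1/s.) -/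
/-- Injectivity of the map `Φ`: let `p ≥ 5` be a prime, `λ, λ' ∈ F_p \ {0, 1, -1}`, and let
`a, a' ∈ F_{p²}` be square roots of `λ² - 1` and `λ'² - 1` respectively. If
`(λ - a)² = (λ' - a')²`, then `λ' = λ` or `λ' = -λ`. -/
theorem lambda_eq_of_sq_eq (p : ℕ) [Fact p.Prime] (hp5 : 5 ≤ p)
    (l l' : ZMod p) (hl0 : l ≠ 0) (hl1 : l ≠ 1) (hln1 : l ≠ -1)
    (hl'0 : l' ≠ 0) (hl'1 : l' ≠ 1) (hl'n1 : l' ≠ -1)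
    (a a' : GaloisField p 2)
    (ha : a ^ 2 = algebraMap (ZMod p) (GaloisField p 2) l ^ 2 - 1)
    (ha' : a' ^ 2 = algebraMap (ZMod p) (GaloisField p 2) l' ^ 2 - 1)
    (h : (algebraMap (ZMod p) (GaloisField p 2) l - a) ^ 2 =
      (algebraMap (ZMod p) (GaloisField p 2) l' - a') ^ 2) :
    l' = l ∨ l' = -l := by
  set f := algebraMap (ZMod p) (GaloisField p 2) with hf
  have hinj : Function.Injective f := (f : ZMod p →+* GaloisField p 2).injective
  have h2 : (2 : ZMod p) ≠ 0 := by
    intro hc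
    have h2' : ((2 : ℕ) : ZMod p) = 0 := by exact_mod_cast hc
    have hd := (ZMod.natCast_eq_zero_iff 2 p).mp h2'
    have := Nat.le_of_dvd (by norm_num) hd
    omega
  have h2F : (2 : GaloisField p 2) ≠ 0 := by
    intro hc
    apply h2
    apply hinj
    rw [map_ofNat, map_zero]
    exact hc
  have e1 : f l * a - f l' * a' = f l ^ 2 - f l' ^ 2 := by
    apply mul_left_cancel₀ h2F
    linear_combination -h + ha - ha'
  have e2 : 2 * f l * f l' * (a * a') = 2 * f l ^ 2 * f l' ^ 2 - f l ^ 2 - f l' ^ 2 := by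
    linear_combination (-(f l * a - f l' * a' + f l ^ 2 - f l' ^ 2)) * e1
      + f l ^ 2 * ha + f l' ^ 2 * ha'
  have e3 : (f l ^ 2 - f l' ^ 2) ^ 2 = 0 := by
    linear_combination (-(2 * f l * f l' * (a * a') + 2 * f l ^ 2 * f l' ^ 2 - f l ^ 2 - f l' ^ 2)) * e2
      + 4 * f l ^ 2 * f l' ^ 2 * a' ^ 2 * ha + 4 * f l ^ 2 * f l' ^ 2 * (f l ^ 2 - 1) * ha'
  have e4 : l ^ 2 = l' ^ 2 := by
    have h0 : f l ^ 2 - f l' ^ 2 = 0 := pow_eq_zero_iff (n := 2) (by norm_num) |>.mp e3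
    apply hinj
    rw [map_pow, map_pow]
    linear_combination h0
  have : (l' - l) * (l' + l) = 0 := by linear_combination -e4
  rcases mul_eq_zero.mp this with h' | h'
  · left; linear_combination h'
  · right; linear_combination h'
end

section
/- Let p be a prime with p ≡ 1 (mod 4), let λ ∈ F_p \ {0, 1, −1}, and let a ∈ F_{p²} satisfy a² = λ² − 1. If the Legendre elliptic curve E_{−(λ−a)²} over F_{p²} is supersingular, then λ² − 1 is not a square in F_p (i.e., a ∉ F_p). -/
open WeierstrassCurve

open Polynomial Finset

@[simp] lemma LegendreCurve_a₁ {F : Type} [CommRing F] (s : F) :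
    (LegendreCurve s).toAffine.a₁ = 0 := rfl
@[simp] lemma LegendreCurve_a₂ {F : Type} [CommRing F] (s : F) :
    (LegendreCurve s).toAffine.a₂ = -(s + 1) := rfl
@[simp] lemma LegendreCurve_a₃ {F : Type} [CommRing F] (s : F) :
    (LegendreCurve s).toAffine.a₃ = 0 := rfl
@[simp] lemma LegendreCurve_a₄ {F : Type} [CommRing F] (s : F) :
    (LegendreCurve s).toAffine.a₄ = s := rfl
@[simp] lemma LegendreCurve_a₆ {F : Type} [CommRing F] (s : F) :
    (LegendreCurve s).toAffine.a₆ = 0 := rfl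

lemma legendre_Δ {F : Type} [Field F] (s : F) :
    (LegendreCurve s).toAffine.Δ = 16 * (s * (s - 1)) ^ 2 := by
  show (LegendreCurve s).Δ = _
  simp only [WeierstrassCurve.Δ, b₂, b₄, b₆, b₈, LegendreCurve]
  ring

lemma legendre_negY {F : Type} [Field F] (s x y : F) :
    (LegendreCurve s).toAffine.negY x y = -y := by
  simp [WeierstrassCurve.Affine.negY]

/-- sum of i-th powers over a finite field -/
lemma sum_pow_eq_ite {F : Type} [Field F] [Fintype F] [DecidableEq F] (i : ℕ)
    (hi : i < 2 * (Fintype.card F - 1)) :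
    ∑ x : F, x ^ i = if i = Fintype.card F - 1 then (-1 : F) else 0 := by
  have hq2 : 1 < Fintype.card F := Fintype.one_lt_card
  by_cases h0 : i = 0
  · subst h0
    rw [if_neg (by omega)]
    simp [Finset.card_univ, FiniteField.cast_card_eq_zero]
  · have key : ∑ x : F, x ^ i = ∑ u : Fˣ, (u : F) ^ i := by
      let φ : Fˣ ↪ F := ⟨fun u ↦ u, Units.val_injective⟩
      have hmap : (univ : Finset Fˣ).map φ = univ \ {0} := by
        ext x
        simpa only [mem_map, mem_univ, Function.Embedding.coeFn_mk, true_and, mem_sdiff,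
          mem_singleton, φ, IsUnit] using isUnit_iff_ne_zero (a := x)
      have h1 : ∑ u : Fˣ, (u : F) ^ i = ∑ x ∈ univ \ {0}, x ^ i := by
        rw [← hmap, Finset.sum_map]; rfl
      rw [h1, Finset.sum_sdiff_eq_sub (Finset.singleton_subset_iff.mpr (mem_univ 0)),
        Finset.sum_singleton, zero_pow h0, sub_zero]
    rw [key, FiniteField.sum_pow_units]
    by_cases hd : Fintype.card F - 1 ∣ i
    · obtain ⟨k, hk⟩ := hd
      have hk2 : k < 2 := by
        by_contra hk2
        push_neg at hk2
        have h2 : (Fintype.card F - 1) * 2 ≤ (Fintype.card F - 1) * k :=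
          Nat.mul_le_mul_left _ hk2
        omega
      interval_cases k
      · omega
      · rw [if_pos ⟨1, hk⟩, if_pos (by omega)]
    · rw [if_neg hd, if_neg (fun h => hd (by rw [h]))]

lemma sum_eval_eq_neg_coeff {F : Type} [Field F] [Fintype F] [DecidableEq F]
    (g : F[X]) (hg : g.natDegree < 2 * (Fintype.card F - 1)) :
    ∑ x : F, g.eval x = -(g.coeff (Fintype.card F - 1)) := by
  have hq2 : 1 < Fintype.card F := Fintype.one_lt_card
  calc ∑ x : F, g.eval x
      = ∑ x : F, ∑ i ∈ range (2 * (Fintype.card F - 1)), g.coeff i * x ^ i := by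
        exact Finset.sum_congr rfl fun x _ => eval_eq_sum_range' hg x
    _ = ∑ i ∈ range (2 * (Fintype.card F - 1)), g.coeff i * ∑ x : F, x ^ i := by
        rw [Finset.sum_comm]
        exact Finset.sum_congr rfl fun i _ => (Finset.mul_sum _ _ _).symm
    _ = ∑ i ∈ range (2 * (Fintype.card F - 1)),
          (if i = Fintype.card F - 1 then -(g.coeff (Fintype.card F - 1)) else 0) := by
        refine Finset.sum_congr rfl fun i hi => ?_
        rw [sum_pow_eq_ite i (mem_range.mp hi)]
        split_ifs with h
        · rw [h]; ring
        · rw [mul_zero]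
    _ = -(g.coeff (Fintype.card F - 1)) := by
        rw [Finset.sum_ite_eq' (range (2 * (Fintype.card F - 1))) (Fintype.card F - 1)
          (fun _ => -(g.coeff (Fintype.card F - 1))), if_pos (mem_range.mpr (by omega))]

open WeierstrassCurve.Affine in
noncomputable def legendrePointEquiv {F : Type} [Field F] {s : F}
    (hΔ : (LegendreCurve s).toAffine.Δ ≠ 0) :
    (LegendreCurve s).toAffine.Point ≃
      Option {xy : F × F // (LegendreCurve s).toAffine.Equation xy.1 xy.2} where
  toFun P := match P with
    | .zero => none
    | @Point.some _ _ _ x y h => some ⟨(x, y), h.1⟩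
  invFun o := match o with
    | none => .zero
    | some ⟨(_, _), hE⟩ => .some _ _ (((LegendreCurve s).toAffine.equation_iff_nonsingular_of_Δ_ne_zero hΔ).mp hE)
  left_inv P := by cases P <;> rfl
  right_inv o := by rcases o with _ | ⟨⟨x, y⟩, hE⟩ <;> rfl


open WeierstrassCurve.Affine in
lemma legendre_card {F : Type} [Field F] [Fintype F] [DecidableEq F] (h2 : ringChar F ≠ 2)
    {s : F} (hs0 : s ≠ 0) (hs1 : s ≠ 1) :
    ((Nat.card (LegendreCurve s).toAffine.Point : F)
        = 1 + ∑ x : F, (x * (x - 1) * (x - s)) ^ (Fintype.card F / 2))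
    ∧ Nat.card (LegendreCurve s).toAffine.Point ≤ 2 * Fintype.card F + 1 := by
  have h2' : (2 : F) ≠ 0 := Ring.two_ne_zero h2
  have h16 : (16 : F) ≠ 0 := by
    have h : (16 : F) = 2 ^ 4 := by norm_num
    rw [h]; exact pow_ne_zero _ h2'
  have hΔ : (LegendreCurve s).toAffine.Δ ≠ 0 := by
    rw [legendre_Δ]
    exact mul_ne_zero h16 (pow_ne_zero _ (mul_ne_zero hs0 (sub_ne_zero.mpr hs1)))
  have hfib : ∀ d : F, (Fintype.card {y : F // y ^ 2 = d} : ℤ) = quadraticChar F d + 1 := by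
    intro d
    have h := quadraticChar_card_sqrts h2 d
    rw [Set.toFinset_card] at h
    rw [← h]
    norm_cast
  have hfibF : ∀ d : F, (Fintype.card {y : F // y ^ 2 = d} : F)
      = d ^ (Fintype.card F / 2) + 1 := by
    intro d
    have h : ((Fintype.card {y : F // y ^ 2 = d} : ℤ) : F)
        = ((quadraticChar F d + 1 : ℤ) : F) := by rw [hfib d]
    push_cast at h
    rw [quadraticChar_eq_pow_of_char_ne_two' h2] at h
    exact h
  have hfib2 : ∀ d : F, Fintype.card {y : F // y ^ 2 = d} ≤ 2 := by
    intro d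
    have h := hfib d
    rcases quadraticChar_isQuadratic F d with h1 | h1 | h1 <;> rw [h1] at h <;> omega
  have hN : Nat.card (LegendreCurve s).toAffine.Point
      = 1 + ∑ x : F, Fintype.card {y : F // y ^ 2 = x * (x - 1) * (x - s)} := by
    have e2 : {xy : F × F // (LegendreCurve s).toAffine.Equation xy.1 xy.2}
        ≃ Σ x : F, {y : F // y ^ 2 = x * (x - 1) * (x - s)} := by
      refine (Equiv.subtypeProdEquivSigmaSubtype _).trans
        (Equiv.sigmaCongrRight fun x => Equiv.subtypeEquivRight fun y => ?_)
      rw [WeierstrassCurve.Affine.equation_iff]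
      simp only [LegendreCurve_a₁, LegendreCurve_a₂, LegendreCurve_a₃, LegendreCurve_a₄,
        LegendreCurve_a₆]
      constructor <;> intro h <;> linear_combination h
    rw [Nat.card_congr ((legendrePointEquiv hΔ).trans (Equiv.optionCongr e2)),
      Nat.card_eq_fintype_card, Fintype.card_option, Fintype.card_sigma, add_comm]
  constructor
  · rw [hN]
    push_cast
    rw [Finset.sum_congr rfl (fun x (_ : x ∈ univ) => hfibF (x * (x - 1) * (x - s))),
      Finset.sum_add_distrib, Finset.sum_const, Finset.card_univ, nsmul_one,
      FiniteField.cast_card_eq_zero, add_zero]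
  · rw [hN]
    have h := Finset.sum_le_sum (fun x (_ : x ∈ (univ : Finset F)) =>
      hfib2 (x * (x - 1) * (x - s)))
    rw [Finset.sum_const, Finset.card_univ, smul_eq_mul] at h
    omega

open WeierstrassCurve.Affine in
lemma legendre_four_dvd {F : Type} [Field F] [Fintype F] (h2 : ringChar F ≠ 2)
    {s : F} (hs0 : s ≠ 0) (hs1 : s ≠ 1) :
    4 ∣ Nat.card (LegendreCurve s).toAffine.Point := by
  have h2' : (2 : F) ≠ 0 := Ring.two_ne_zero h2
  have h16 : (16 : F) ≠ 0 := by
    have h : (16 : F) = 2 ^ 4 := by norm_num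
    rw [h]; exact pow_ne_zero _ h2'
  have hΔ : (LegendreCurve s).toAffine.Δ ≠ 0 := by
    rw [legendre_Δ]
    exact mul_ne_zero h16 (pow_ne_zero _ (mul_ne_zero hs0 (sub_ne_zero.mpr hs1)))
  haveI hfin1 : Finite {xy : F × F // (LegendreCurve s).toAffine.Equation xy.1 xy.2} :=
    Subtype.finite
  haveI hfin2 : Finite (Option {xy : F × F // (LegendreCurve s).toAffine.Equation xy.1 xy.2}) :=
    Finite.of_equiv _ (Equiv.optionEquivSumPUnit.{0, 0} _).symm
  haveI : Finite (LegendreCurve s).toAffine.Point :=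
    Finite.of_equiv _ (legendrePointEquiv hΔ).symm
  have hA : (LegendreCurve s).toAffine.Nonsingular 0 0 := by
    refine ((LegendreCurve s).toAffine.equation_iff_nonsingular_of_Δ_ne_zero hΔ).mp ?_
    rw [equation_iff]
    simp
  have hB : (LegendreCurve s).toAffine.Nonsingular 1 0 := by
    refine ((LegendreCurve s).toAffine.equation_iff_nonsingular_of_Δ_ne_zero hΔ).mp ?_
    rw [equation_iff]
    simp only [LegendreCurve_a₁, LegendreCurve_a₂, LegendreCurve_a₃, LegendreCurve_a₄,
      LegendreCurve_a₆]
    ring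
  have hC : (LegendreCurve s).toAffine.Nonsingular s 0 := by
    refine ((LegendreCurve s).toAffine.equation_iff_nonsingular_of_Δ_ne_zero hΔ).mp ?_
    rw [equation_iff]
    simp only [LegendreCurve_a₁, LegendreCurve_a₂, LegendreCurve_a₃, LegendreCurve_a₄,
      LegendreCurve_a₆]
    ring
  classical
  let T : AddSubgroup (LegendreCurve s).toAffine.Point :=
    { carrier := {P | P + P = 0}
      zero_mem' := by simp
      add_mem' := by
        intro P Q hP hQ
        simp only [Set.mem_setOf_eq] at *
        have h : P + Q + (P + Q) = P + P + (Q + Q) := by abel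
        rw [h, hP, hQ, add_zero]
      neg_mem' := by
        intro P hP
        simp only [Set.mem_setOf_eq] at *
        have h : -P + -P = -(P + P) := by abel
        rw [h, hP, neg_zero] }
  have hmem : ∀ P, P ∈ T ↔ P + P = 0 := fun P => Iff.rfl
  have hT : (T : Set (LegendreCurve s).toAffine.Point)
      = {0, Point.some _ _ hA, Point.some _ _ hB, Point.some _ _ hC} := by
    ext P
    simp only [SetLike.mem_coe, hmem, Set.mem_insert_iff, Set.mem_singleton_iff]
    constructor
    · intro hP
      rw [add_eq_zero_iff_eq_neg] at hP
      cases P with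
      | zero => left; rfl
      | @some x y h =>
        rw [Point.neg_some] at hP
        injection hP with hx hy
        rw [legendre_negY] at hy
        have hy0 : y = 0 := by
          have h20 : (2 : F) * y = 0 := by linear_combination hy
          rcases mul_eq_zero.mp h20 with h' | h'
          · exact absurd h' h2'
          · exact h'
        subst hy0
        have heq := h.1
        rw [equation_iff] at heq
        simp only [LegendreCurve_a₁, LegendreCurve_a₂, LegendreCurve_a₃, LegendreCurve_a₄,
          LegendreCurve_a₆] at heq
        have hfac : x * (x - 1) * (x - s) = 0 := by linear_combination -heq
        rcases mul_eq_zero.mp hfac with h' | h'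
        · rcases mul_eq_zero.mp h' with h'' | h''
          · right; left; subst h''; rfl
          · right; right; left
            have : x = 1 := by linear_combination h''
            subst this; rfl
        · right; right; right
          have : x = s := by linear_combination h'
          subst this; rfl
    · rintro (rfl | rfl | rfl | rfl)
      · rw [add_zero]
      all_goals
        refine Point.add_of_Y_eq rfl ?_
        rw [legendre_negY, neg_zero]
  have hT4 : Nat.card T = 4 := by
    have hcoe : Nat.card T
        = ({0, Point.some _ _ hA, Point.some _ _ hB, Point.some _ _ hC} :
            Set (LegendreCurve s).toAffine.Point).ncard := by
      rw [← hT, ← Nat.card_coe_set_eq]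
      rfl
    rw [hcoe]
    have d1 : (0 : (LegendreCurve s).toAffine.Point) ≠ Point.some _ _ hA :=
      (Point.some_ne_zero hA).symm
    have d2 : (0 : (LegendreCurve s).toAffine.Point) ≠ Point.some _ _ hB :=
      (Point.some_ne_zero hB).symm
    have d3 : (0 : (LegendreCurve s).toAffine.Point) ≠ Point.some _ _ hC :=
      (Point.some_ne_zero hC).symm
    have d4 : Point.some _ _ hA ≠ Point.some _ _ hB := by
      intro h
      injection h with hx hy
      exact zero_ne_one hx
    have d5 : Point.some _ _ hA ≠ Point.some _ _ hC := by
      intro h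
      injection h with hx hy
      exact hs0 hx.symm
    have d6 : Point.some _ _ hB ≠ Point.some _ _ hC := by
      intro h
      injection h with hx hy
      exact hs1 hx.symm
    rw [Set.ncard_insert_of_notMem (by simp [d1, d2, d3]) (Set.toFinite _),
      Set.ncard_insert_of_notMem (by simp [d4, d5]) (Set.toFinite _),
      Set.ncard_pair d6]
  calc (4 : ℕ) = Nat.card T := hT4.symm
    _ ∣ _ := AddSubgroup.card_addSubgroup_dvd_card T

lemma my_frob {p : ℕ} [Fact p.Prime] {K : Type} [Field K] [CharP K p]
    (f : ZMod p →+* K) (H : Polynomial (ZMod p)) (x : K) :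
    (H.map f).eval x ^ p = (H.map f).eval (x ^ p) := by
  rw [eval_map, eval_map]
  have h1 : (frobenius K p).comp f = f := by
    ext a
    simp only [RingHom.comp_apply, frobenius_def, ← map_pow, ZMod.pow_card]
  have h2 := Polynomial.hom_eval₂ H f (frobenius K p) x
  rw [h1] at h2
  simpa [frobenius_def] using h2

lemma index_eq {p m i j : ℕ} (hp : p = 2 * m + 1) (hm : 0 < m)
    (hi : i ≤ 3 * m) (hj : j ≤ 3 * m) (h : p * j + i + 1 = p ^ 2) :
    j = 2 * m ∧ i = 2 * m := by
  subst hp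
  have e1 : (2 * m + 1) ^ 2 = (2 * m + 1) * (2 * m) + (2 * m + 1) := by ring
  have hj1 : j ≤ 2 * m := by
    by_contra hc
    push_neg at hc
    have h1 : (2 * m + 1) * (2 * m + 1) ≤ (2 * m + 1) * j := Nat.mul_le_mul_left _ hc
    have e2 : (2 * m + 1) ^ 2 = (2 * m + 1) * (2 * m + 1) := by ring
    linarith
  have hj2 : 2 * m ≤ j := by
    by_contra hc
    push_neg at hc
    have h1 : (2 * m + 1) * (j + 1) ≤ (2 * m + 1) * (2 * m) :=
      Nat.mul_le_mul_left _ (by omega)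
    have e3 : (2 * m + 1) * (j + 1) = (2 * m + 1) * j + (2 * m + 1) := by ring
    linarith
  have hj' : j = 2 * m := le_antisymm hj1 hj2
  subst hj'
  exact ⟨rfl, by linarith⟩

/-- Let `p ≡ 1 (mod 4)` be a prime, `λ ∈ F_p \ {0, 1, -1}`, and `a ∈ F_{p²}` a square root
of `λ² - 1`. If the Legendre curve `E_{-(λ-a)²}` over `F_{p²}` is supersingular, then
`λ² - 1` is not a square in `F_p`. -/
theorem not_isSquare_of_supersingular (p : ℕ) [Fact p.Prime] (hp : p % 4 = 1)
    (l : ZMod p) (hl0 : l ≠ 0) (hl1 : l ≠ 1) (hln1 : l ≠ -1)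
    (a : GaloisField p 2)
    (ha : a ^ 2 = algebraMap (ZMod p) (GaloisField p 2) l ^ 2 - 1)
    (hss : IsSupersingular p
      (LegendreCurve (-(algebraMap (ZMod p) (GaloisField p 2) l - a) ^ 2))) :
    ¬ IsSquare (l ^ 2 - 1) := by
  intro hsq
  classical
  set φ : ZMod p →+* GaloisField p 2 :=
    (algebraMap (ZMod p) (GaloisField p 2) : ZMod p →+* GaloisField p 2) with hφ
  have hpp : p.Prime := Fact.out
  have hp5 : 5 ≤ p := by
    have h2 := hpp.two_le
    omega
  obtain ⟨m, hm⟩ : ∃ m, p = 2 * m + 1 := ⟨p / 2, by omega⟩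
  have hm2 : 2 ≤ m := by omega
  -- find b with φ b = a
  obtain ⟨r, hr⟩ := hsq
  have hb : ∃ b : ZMod p, φ b = a := by
    have h1 : (φ r - a) * (φ r + a) = 0 := by
      have h2 : φ r ^ 2 = a ^ 2 := by
        rw [ha, ← map_pow, ← map_pow]
        rw [show r ^ 2 = l ^ 2 - 1 by rw [hr]; ring]
        rw [map_sub, map_one, map_pow]
      linear_combination h2
    rcases mul_eq_zero.mp h1 with h | h
    · exact ⟨r, by linear_combination h⟩
    · exact ⟨-r, by rw [map_neg]; linear_combination -h⟩
  obtain ⟨b, hbeq⟩ := hb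
  have hb2 : b ^ 2 = l ^ 2 - 1 := by
    apply φ.injective
    rw [map_pow, hbeq, ha, map_sub, map_one, map_pow]
  set s₀ : ZMod p := -(l - b) ^ 2 with hs₀
  have hcharZ : ringChar (ZMod p) ≠ 2 := by
    rw [ZMod.ringChar_zmod_n]
    omega
  have h2Z : (2 : ZMod p) ≠ 0 := Ring.two_ne_zero hcharZ
  have hs0 : s₀ ≠ 0 := by
    intro h
    have hlb : l - b = 0 := by
      have h1 : (l - b) ^ 2 = 0 := by rw [hs₀] at h; linear_combination -h
      exact pow_eq_zero_iff (n := 2) (by norm_num) |>.mp h1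
    have h1 : (1 : ZMod p) = 0 := by
      have : b = l := by linear_combination -hlb
      rw [this] at hb2
      linear_combination hb2
    exact one_ne_zero h1
  have hs1 : s₀ ≠ 1 := by
    intro h
    have h1 : (l - b) ^ 2 = -1 := by rw [hs₀] at h; linear_combination -h
    have h2 : (l - b) * (l + b) = 1 := by linear_combination -hb2
    have h3 : (l - b) * ((l - b) + (l + b)) = 0 := by linear_combination h1 + h2
    rcases mul_eq_zero.mp h3 with h4 | h4
    · have h5 : (1 : ZMod p) = 0 := by rw [← h2, h4, zero_mul]
      exact one_ne_zero h5
    · have h5 : (2 : ZMod p) * l = 0 := by linear_combination h4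
      rcases mul_eq_zero.mp h5 with h6 | h6
      exacts [h2Z h6, hl0 h6]
  -- instances on K
  letI : Fintype (GaloisField p 2) := Fintype.ofFinite _
  letI : DecidableEq (GaloisField p 2) := Classical.decEq _
  obtain ⟨M, hM1, hM2⟩ : ∃ M, p ^ 2 = 2 * M + 1 ∧ M = m * p + m :=
    ⟨m * p + m, by rw [hm]; ring, rfl⟩
  have hcardK : Fintype.card (GaloisField p 2) = p ^ 2 := by
    rw [← Nat.card_eq_fintype_card]
    exact GaloisField.card p 2 (by norm_num)
  have hexpK : Fintype.card (GaloisField p 2) / 2 = M := by rw [hcardK, hM1]; omega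
  have hcardZ : Fintype.card (ZMod p) = p := ZMod.card p
  have hexpZ : Fintype.card (ZMod p) / 2 = m := by rw [hcardZ]; omega
  have hcharK : ringChar (GaloisField p 2) ≠ 2 := by
    rw [ringChar.eq (GaloisField p 2) p]
    omega
  -- transport the supersingularity hypothesis
  have hs : -(φ l - a) ^ 2 = φ s₀ := by
    rw [hs₀, map_neg, map_pow, map_sub, hbeq]
  have hsK0 : φ s₀ ≠ 0 := fun h => hs0 (φ.injective (by rw [h, map_zero]))
  have hsK1 : φ s₀ ≠ 1 := fun h => hs1 (φ.injective (by rw [h, map_one]))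
  rw [hs] at hss
  have hss' : Nat.card (LegendreCurve (φ s₀)).toAffine.Point ≡ 1 [MOD p] := hss
  have hN2 : ((Nat.card (LegendreCurve (φ s₀)).toAffine.Point : ℕ) : GaloisField p 2) = 1 := by
    have h1 : ((Nat.card (LegendreCurve (φ s₀)).toAffine.Point : ℕ) : ZMod p)
        = ((1 : ℕ) : ZMod p) := (ZMod.natCast_eq_natCast_iff _ _ _).mpr hss'
    calc ((Nat.card (LegendreCurve (φ s₀)).toAffine.Point : ℕ) : GaloisField p 2)
        = φ ((Nat.card (LegendreCurve (φ s₀)).toAffine.Point : ℕ) : ZMod p) :=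
          (map_natCast φ _).symm
      _ = φ ((1 : ℕ) : ZMod p) := by rw [h1]
      _ = 1 := by simp
  obtain ⟨hKeq, _⟩ := legendre_card hcharK hsK0 hsK1
  have hSum2 : ∑ x : GaloisField p 2,
      (x * (x - 1) * (x - φ s₀)) ^ (Fintype.card (GaloisField p 2) / 2) = 0 := by
    rw [hN2] at hKeq
    linear_combination -hKeq
  -- the polynomial and its key coefficient
  set g : Polynomial (ZMod p) := X * (X - 1) * (X - C s₀) with hg
  set c : ZMod p := (g ^ m).coeff (2 * m) with hc
  have hdeg3 : g.natDegree ≤ 3 := by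
    rw [hg]
    refine natDegree_mul_le.trans ?_
    have hX : (X : Polynomial (ZMod p)).natDegree ≤ 1 := natDegree_X_le
    have hX1 : (X - 1 : Polynomial (ZMod p)).natDegree ≤ 1 := by
      rw [show (1 : Polynomial (ZMod p)) = C 1 from C_1.symm]
      exact (natDegree_X_sub_C _).le
    have hXs : ((X - C s₀ : Polynomial (ZMod p))).natDegree ≤ 1 := (natDegree_X_sub_C _).le
    have h1 : (X * (X - 1) : Polynomial (ZMod p)).natDegree ≤ 2 :=
      natDegree_mul_le.trans (by omega)
    omega
  have hdeg : (g ^ m).natDegree ≤ 3 * m := by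
    refine natDegree_pow_le.trans ?_
    calc m * g.natDegree ≤ m * 3 := Nat.mul_le_mul_left _ hdeg3
      _ = 3 * m := by ring
  have hevalg : ∀ x : ZMod p, (g ^ m).eval x = (x * (x - 1) * (x - s₀)) ^ m := by
    intro x
    rw [hg, eval_pow, eval_mul, eval_mul, eval_sub, eval_sub, eval_X, eval_one, eval_C]
  -- the sum over ZMod p
  have hSum1 : ∑ x : ZMod p, (x * (x - 1) * (x - s₀)) ^ m = -c := by
    have h1 : ∑ x : ZMod p, (g ^ m).eval x
        = -((g ^ m).coeff (Fintype.card (ZMod p) - 1)) := by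
      refine sum_eval_eq_neg_coeff _ ?_
      rw [hcardZ]
      omega
    rw [← Finset.sum_congr rfl fun x (_ : x ∈ univ) => hevalg x, h1, hcardZ,
      show p - 1 = 2 * m by omega]
  -- the sum over K
  set h : Polynomial (GaloisField p 2) := (g ^ m).map φ with hh
  have hdegh : h.natDegree ≤ 3 * m := (natDegree_map_le).trans hdeg
  have hevalh : ∀ x : GaloisField p 2, h.eval x = (x * (x - 1) * (x - φ s₀)) ^ m := by
    intro x
    rw [hh, Polynomial.map_pow, eval_pow]
    congr 1
    rw [hg, Polynomial.map_mul, Polynomial.map_mul, Polynomial.map_sub, Polynomial.map_sub,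
      map_X, Polynomial.map_one, map_C, eval_mul, eval_mul, eval_sub, eval_sub, eval_X,
      eval_one, eval_C]
  have hpow : ∀ x : GaloisField p 2,
      (x * (x - 1) * (x - φ s₀)) ^ M = h.eval (x ^ p) * h.eval x := by
    intro x
    have h1 : M = m * p + m := hM2
    rw [h1, pow_add, pow_mul, ← hevalh x, ← my_frob φ (g ^ m) x, ← hh, mul_comm]
  have hb1 : ∀ j ≤ 3 * m, ∀ i ≤ 3 * m,
      p * j + i < 2 * (Fintype.card (GaloisField p 2) - 1) := by
    intro j hj i hi
    have h1 : p * j ≤ p * (3 * m) := Nat.mul_le_mul_left _ hj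
    have h2 : p * (3 * m) = 3 * (m * p) := by ring
    have h4 : m ≤ m * p := Nat.le_mul_of_pos_right m (by omega)
    have h5 : Fintype.card (GaloisField p 2) - 1 = 2 * M := by rw [hcardK, hM1]; omega
    rw [h5]
    have h6 : M = m * p + m := hM2
    linarith
  have hcard1 : Fintype.card (GaloisField p 2) - 1 = 2 * M := by rw [hcardK, hM1]; omega
  have hSum2' : ∑ x : GaloisField p 2, (x * (x - 1) * (x - φ s₀)) ^ M
      = -(φ c * φ c) := by
    calc ∑ x : GaloisField p 2, (x * (x - 1) * (x - φ s₀)) ^ M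
        = ∑ x : GaloisField p 2, h.eval (x ^ p) * h.eval x :=
          Finset.sum_congr rfl fun x _ => hpow x
      _ = ∑ x : GaloisField p 2, ∑ j ∈ range (3 * m + 1), ∑ i ∈ range (3 * m + 1),
            (h.coeff j * h.coeff i) * x ^ (p * j + i) := by
          refine Finset.sum_congr rfl fun x _ => ?_
          rw [eval_eq_sum_range' (Nat.lt_succ_of_le hdegh) (x ^ p),
            eval_eq_sum_range' (Nat.lt_succ_of_le hdegh) x, Finset.sum_mul_sum]
          refine Finset.sum_congr rfl fun j _ => Finset.sum_congr rfl fun i _ => ?_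
          rw [← pow_mul]
          ring
      _ = ∑ j ∈ range (3 * m + 1), ∑ i ∈ range (3 * m + 1),
            (h.coeff j * h.coeff i) * ∑ x : GaloisField p 2, x ^ (p * j + i) := by
          rw [Finset.sum_comm]
          refine Finset.sum_congr rfl fun j _ => ?_
          rw [Finset.sum_comm]
          refine Finset.sum_congr rfl fun i _ => ?_
          rw [Finset.mul_sum]
      _ = ∑ j ∈ range (3 * m + 1), ∑ i ∈ range (3 * m + 1),
            (if j = 2 * m ∧ i = 2 * m then -(φ c * φ c) else 0) := by
          refine Finset.sum_congr rfl fun j hj => Finset.sum_congr rfl fun i hi => ?_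
          have hj' : j ≤ 3 * m := by have := mem_range.mp hj; omega
          have hi' : i ≤ 3 * m := by have := mem_range.mp hi; omega
          rw [sum_pow_eq_ite _ (hb1 j hj' i hi'), hcard1]
          by_cases hcond : p * j + i = 2 * M
          · obtain ⟨hjv, hiv⟩ := index_eq hm (by omega) hi' hj' (by omega)
            rw [if_pos hcond, if_pos ⟨hjv, hiv⟩, hjv, hiv]
            have hcb : h.coeff (2 * m) = φ c := by rw [hh, coeff_map, hc]
            rw [hcb]
            ring
          · rw [if_neg hcond, if_neg ?_, mul_zero]
            rintro ⟨rfl, rfl⟩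
            exact hcond (by rw [hM2]; ring)
      _ = -(φ c * φ c) := by
          have inner : ∀ j, ∑ i ∈ range (3 * m + 1),
              (if j = 2 * m ∧ i = 2 * m then -(φ c * φ c) else (0 : GaloisField p 2))
              = if j = 2 * m then -(φ c * φ c) else 0 := by
            intro j
            by_cases hj : j = 2 * m
            · subst hj
              rw [if_pos rfl]
              simp only [eq_self_iff_true, true_and]
              rw [Finset.sum_ite_eq' (range (3 * m + 1)) (2 * m)
                (fun _ => -(φ c * φ c)), if_pos (mem_range.mpr (by omega))]
            · simp [hj]
          rw [Finset.sum_congr rfl fun j (_ : j ∈ range (3 * m + 1)) => inner j,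
            Finset.sum_ite_eq' (range (3 * m + 1)) (2 * m) (fun _ => -(φ c * φ c)),
            if_pos (mem_range.mpr (by omega))]
  -- conclude c = 0
  have hc0 : c = 0 := by
    apply φ.injective
    rw [map_zero]
    have h1 : -(φ c * φ c) = 0 := by
      rw [← hSum2', ← hexpK]
      exact hSum2
    have h2 : φ c * φ c = 0 := by linear_combination -h1
    rcases mul_eq_zero.mp h2 with h | h <;> exact h
  -- now count over ZMod p
  obtain ⟨hZeq, hZle⟩ := legendre_card hcharZ hs0 hs1
  have hNcast : ((Nat.card (LegendreCurve s₀).toAffine.Point : ℕ) : ZMod p) = 1 := by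
    rw [hZeq, hexpZ, hSum1, hc0, neg_zero, add_zero]
  set N : ℕ := Nat.card (LegendreCurve s₀).toAffine.Point with hN
  have hmod : N % p = 1 := by
    have h1 : (N : ZMod p) = ((1 : ℕ) : ZMod p) := by rw [hNcast]; simp
    have h2 : N ≡ 1 [MOD p] := (ZMod.natCast_eq_natCast_iff _ _ _).mp h1
    have h3 : N % p = 1 % p := h2
    have h4 : 1 % p = 1 := Nat.one_mod_eq_one.mpr (by omega)
    omega
  have hdiv := Nat.div_add_mod N p
  obtain ⟨k, hk⟩ : ∃ k, N = p * k + 1 := by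
    refine ⟨N / p, ?_⟩
    conv_lhs => rw [← hdiv]
    rw [hmod]
  have hNle : N ≤ 2 * p + 1 := by rw [hcardZ] at hZle; exact hZle
  have hkle : k ≤ 2 := by
    by_contra hcon
    push_neg at hcon
    have h1 : p * 3 ≤ p * k := Nat.mul_le_mul_left _ hcon
    linarith
  have h4 : 4 ∣ N := legendre_four_dvd hcharZ hs0 hs1
  obtain ⟨t, ht⟩ : ∃ t, p = 4 * t + 1 := ⟨p / 4, by omega⟩
  obtain ⟨u, hu⟩ : ∃ u, N = 4 * u + (k + 1) := ⟨t * k, by rw [hk, ht]; ring⟩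
  omega
end
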